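/- arXiv:2008.05778 — 5 statements merged into one kernel-verified Lean document; each statement's English description precedes it below -/
import Mathlib

section
/- There is an absolute constant C such that for all A > 0, all complex z with |z| ≤ A, and all integers n ≥ 1, |binom(n+z−1, n) − n^{z−1}/Γ(z)| ≤ C(A+1)^{CA} · n^{Re(z) − 2}. -/
open Filter

noncomputable def bagP (z : ℂ) (n : ℕ) : ℂ := (∏ i ∈ Finset.range n, (z + i)) / n.factorial

noncomputable def bagA (z : ℂ) (n : ℕ) : ℂ := (n : ℂ) ^ (1 - z) * bagP z n

lemma bagP_succ (z : ℂ) (m : ℕ) : bagP z (m + 1) = bagP z m * (z + m) / (m + 1) := by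
  unfold bagP
  rw [Finset.prod_range_succ, Nat.factorial_succ]
  push_cast
  rw [div_mul_eq_mul_div, div_div, mul_comm ((m:ℂ) + 1)]

lemma bagP_bound {A : ℝ} (hA : 0 < A) {z : ℂ} (hz : ‖z‖ ≤ A) :
    ∀ m : ℕ, 1 ≤ m → ‖bagP z m‖ * m ≤ A * (m : ℝ) ^ (A + 1) := by
  intro m hm
  induction m, hm using Nat.le_induction with
  | base =>
    simp only [bagP, Finset.prod_range_one, Nat.factorial_one, Nat.cast_one, div_one,
      Nat.cast_zero, add_zero, mul_one, Real.one_rpow]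
    simpa using hz
  | succ m hm ih =>
    have hm0 : (0:ℝ) < m := by exact_mod_cast hm
    have key : ‖bagP z (m+1)‖ * ((m:ℝ) + 1) = ‖bagP z m‖ * ‖z + m‖ := by
      rw [bagP_succ, norm_div, norm_mul]
      have h : ‖((m : ℂ) + 1)‖ = (m:ℝ) + 1 := by
        rw [show ((m:ℂ) + 1) = ((m + 1 : ℕ) : ℂ) by push_cast; ring, Complex.norm_natCast]
        push_cast; ring
      rw [h]
      field_simp
    have hzm : ‖z + m‖ ≤ A + m := by
      calc ‖z + m‖ ≤ ‖z‖ + ‖(m:ℂ)‖ := norm_add_le _ _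
        _ ≤ A + m := by
            rw [Complex.norm_natCast]
            exact add_le_add_left hz _
    have hbern : (m : ℝ) ^ (A + 1) * (1 + (A+1)/m) ≤ ((m:ℝ) + 1) ^ (A + 1) := by
      have h1 : ((m:ℝ) + 1) ^ (A+1) = ((m:ℝ) * (1 + 1/m)) ^ (A+1) := by
        congr 1
        field_simp
      rw [h1, Real.mul_rpow hm0.le (by positivity)]
      gcongr
      have h0 : (0:ℝ) ≤ 1/m := by positivity
      have := one_add_mul_self_le_rpow_one_add (s := 1/(m:ℝ)) (by linarith)
        (p := A + 1) (by linarith)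
      calc 1 + (A+1)/m = 1 + (A+1) * (1/m) := by ring
        _ ≤ (1 + 1/m) ^ (A+1) := this
    have hPm : ‖bagP z m‖ ≤ A * (m:ℝ) ^ (A+1) / m := (le_div_iff₀ hm0).mpr ih
    have step : ‖bagP z m‖ * ‖z + m‖ ≤ (A * (m:ℝ) ^ (A+1) / m) * (A + m) :=
      mul_le_mul hPm hzm (norm_nonneg _) (by positivity)
    have hrp : (0:ℝ) < (m:ℝ) ^ (A+1) := by positivity
    have final : (A * (m:ℝ) ^ (A+1) / m) * (A + m) ≤ A * ((m:ℝ) + 1) ^ (A+1) := by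
      rw [div_mul_eq_mul_div, div_le_iff₀ hm0]
      have h3 : (m:ℝ) * (1 + (A+1)/m) = m + (A+1) := by field_simp
      calc A * (m:ℝ)^(A+1) * (A+m)
          ≤ A * ((m:ℝ)^(A+1) * (1 + (A+1)/m)) * m := by
            rw [show A * ((m:ℝ)^(A+1)*(1+(A+1)/m)) * m
              = A * ((m:ℝ)^(A+1) * ((m:ℝ)*(1+(A+1)/m))) by ring, h3]
            nlinarith
        _ ≤ A * ((m:ℝ)+1)^(A+1) * m := by
            nlinarith [mul_le_mul_of_nonneg_left hbern hA.le]
    have hfin : ‖bagP z (m+1)‖ * ((m:ℝ)+1) ≤ A * ((m:ℝ)+1) ^ (A+1) :=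
      key ▸ (step.trans final)
    push_cast
    exact hfin

lemma log_quad {w : ℂ} (hw : ‖w‖ ≤ 1/2) : ‖Complex.log (1 + w) - w‖ ≤ ‖w‖^2 := by
  have h1 : ‖w‖ < 1 := lt_of_le_of_lt hw (by norm_num)
  have h2 := Complex.norm_log_one_add_sub_self_le h1
  have h3 : (1 - ‖w‖)⁻¹ ≤ 2 := by
    rw [inv_le_comm₀ (by linarith) (by norm_num)]
    linarith
  calc ‖Complex.log (1 + w) - w‖ ≤ ‖w‖^2 * (1 - ‖w‖)⁻¹ / 2 := h2
    _ ≤ ‖w‖^2 * 2 / 2 := by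
      gcongr
    _ = ‖w‖^2 := by ring

lemma rho_est {A : ℝ} (hA : 0 < A) {z : ℂ} (hz : ‖z‖ ≤ A) {m : ℕ}
    (hm : 2 * (A + 1) ≤ (m : ℝ)) :
    ‖(1 + z / m) * (1 + 1 / (m:ℂ)) ^ (-z) - 1‖ ≤ 2 * (A+1)^2 / (m:ℝ)^2 := by
  have hm0 : (0:ℝ) < m := by linarith
  have hmc : (m:ℂ) ≠ 0 := by exact_mod_cast hm0.ne'
  set w₂ : ℂ := (m:ℂ)⁻¹ with hw₂
  set w₁ : ℂ := z * w₂ with hw₁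
  have hnw₂ : ‖w₂‖ = 1 / m := by rw [hw₂, norm_inv, Complex.norm_natCast, one_div]
  have hnw₁ : ‖w₁‖ ≤ A / m := by
    rw [hw₁, norm_mul, hnw₂]
    calc ‖z‖ * (1/(m:ℝ)) ≤ A * (1/m) := by gcongr
      _ = A / m := by ring
  have hAm : (A + 1) / m ≤ 1/2 := by
    rw [div_le_iff₀ hm0]; linarith
  have h₁2 : ‖w₁‖ ≤ 1/2 := by
    refine hnw₁.trans (le_trans ?_ hAm)
    gcongr
    linarith
  have h₂2 : ‖w₂‖ ≤ 1/2 := by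
    rw [hnw₂]
    calc (1:ℝ)/m ≤ (A+1)/m := by gcongr; linarith
      _ ≤ 1/2 := hAm
  have hne₁ : (1 : ℂ) + w₁ ≠ 0 := by
    intro h
    have : ‖(1:ℂ) + w₁‖ = 0 := by rw [h, norm_zero]
    have h4 : (1:ℝ) - ‖w₁‖ ≤ ‖(1:ℂ) + w₁‖ := by
      calc (1:ℝ) - ‖w₁‖ = ‖(1:ℂ)‖ - ‖-w₁‖ := by simp
        _ ≤ ‖(1:ℂ) - -w₁‖ := norm_sub_norm_le _ _
        _ = ‖(1:ℂ) + w₁‖ := by ring_nf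
    rw [this] at h4
    linarith
  have hne₂ : (1 : ℂ) + w₂ ≠ 0 := by
    intro h
    have : ‖(1:ℂ) + w₂‖ = 0 := by rw [h, norm_zero]
    have h4 : (1:ℝ) - ‖w₂‖ ≤ ‖(1:ℂ) + w₂‖ := by
      calc (1:ℝ) - ‖w₂‖ = ‖(1:ℂ)‖ - ‖-w₂‖ := by simp
        _ ≤ ‖(1:ℂ) - -w₂‖ := norm_sub_norm_le _ _
        _ = ‖(1:ℂ) + w₂‖ := by ring_nf
    rw [this] at h4
    linarith
  -- rewrite the product as exp L
  set L : ℂ := (Complex.log (1 + w₁) - w₁) - z * (Complex.log (1 + w₂) - w₂) with hL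
  have key : (1 + z / m) * (1 + 1 / (m:ℂ)) ^ (-z) = Complex.exp L := by
    have e1 : (1 : ℂ) + z / m = Complex.exp (Complex.log (1 + w₁)) := by
      rw [Complex.exp_log hne₁, hw₁, hw₂, div_eq_mul_inv]
    have e2 : ((1 : ℂ) + 1 / (m:ℂ)) ^ (-z) = Complex.exp (-z * Complex.log (1 + w₂)) := by
      rw [show (1 : ℂ) + 1 / (m:ℂ) = 1 + w₂ by rw [hw₂, one_div],
        Complex.cpow_def_of_ne_zero hne₂, mul_comm]
    rw [e1, e2, ← Complex.exp_add]
    congr 1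
    rw [hL, hw₁]
    ring
  have hLle : ‖L‖ ≤ (A+1)^2 / (m:ℝ)^2 := by
    have b1 : ‖Complex.log (1 + w₁) - w₁‖ ≤ ‖w₁‖^2 := log_quad h₁2
    have b2 : ‖Complex.log (1 + w₂) - w₂‖ ≤ ‖w₂‖^2 := log_quad h₂2
    calc ‖L‖ ≤ ‖Complex.log (1 + w₁) - w₁‖ + ‖z * (Complex.log (1 + w₂) - w₂)‖ :=
          norm_sub_le _ _
      _ ≤ ‖w₁‖^2 + ‖z‖ * ‖w₂‖^2 := by
          rw [norm_mul]
          gcongr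
      _ ≤ (A/m)^2 + A * (1/m)^2 := by
          have hz' : ‖z‖ ≤ A := by exact hz
          have g1 : ‖w₁‖^2 ≤ (A/(m:ℝ))^2 := by
            apply pow_le_pow_left₀ (norm_nonneg _) hnw₁
          have g2 : ‖z‖ * ‖w₂‖^2 ≤ A * (1/(m:ℝ))^2 := by
            apply mul_le_mul hz' _ (by positivity) hA.le
            apply pow_le_pow_left₀ (norm_nonneg _) hnw₂.le
          linarith
      _ = (A^2 + A) / (m:ℝ)^2 := by ring
      _ ≤ (A+1)^2 / (m:ℝ)^2 := by
          gcongr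
          nlinarith
  have hL1 : ‖L‖ ≤ 1 := by
    refine hLle.trans ?_
    rw [div_le_one (by positivity)]
    nlinarith
  have := Complex.norm_exp_sub_one_le (x := L) hL1
  rw [key]
  calc ‖Complex.exp L - 1‖ ≤ 2 * ‖L‖ := by
        exact this
    _ ≤ 2 * ((A+1)^2 / (m:ℝ)^2) := by gcongr
    _ = 2 * (A+1)^2 / (m:ℝ)^2 := by ring

lemma bagA_succ (z : ℂ) {m : ℕ} (hm : 1 ≤ m) :
    bagA z (m + 1) = bagA z m * ((1 + z / m) * (1 + 1 / (m:ℂ)) ^ (-z)) := by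
  have hm0 : (0:ℝ) < m := by exact_mod_cast hm
  have hmc : (m:ℂ) ≠ 0 := Nat.cast_ne_zero.mpr (by omega)
  have hb0 : (0:ℝ) < 1 + 1/(m:ℝ) := by positivity
  have hbc : ((1:ℂ) + 1/(m:ℂ)) ≠ 0 := by
    rw [show ((1:ℂ) + 1/(m:ℂ)) = (((1 + 1/(m:ℝ)) : ℝ) : ℂ) by push_cast; ring]
    exact_mod_cast hb0.ne'
  have key1 : ((m + 1 : ℕ) : ℂ) ^ (1 - z) = (m:ℂ) ^ (1 - z) * ((1:ℂ) + 1/(m:ℂ)) ^ (1 - z) := by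
    have h := Complex.mul_cpow_ofReal_nonneg (a := (m:ℝ)) (b := 1 + 1/(m:ℝ))
      hm0.le hb0.le (1 - z)
    have hcast : (((m:ℝ) : ℂ)) * (((1 + 1/(m:ℝ) : ℝ)) : ℂ) = ((m + 1 : ℕ) : ℂ) := by
      push_cast
      field_simp
    rw [← hcast]
    rw [h]
    norm_num
  have key2 : ((1:ℂ) + 1/(m:ℂ)) ^ (1 - z)
      = ((1:ℂ) + 1/(m:ℂ)) * ((1:ℂ) + 1/(m:ℂ)) ^ (-z) := by
    rw [show (1 : ℂ) - z = 1 + (-z) by ring, Complex.cpow_add _ _ hbc, Complex.cpow_one]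
  have hm1c : ((m:ℂ) + 1) ≠ 0 := by
    rw [show ((m:ℂ) + 1) = ((m + 1 : ℕ) : ℂ) by push_cast; ring]
    exact Nat.cast_ne_zero.mpr (by omega)
  unfold bagA
  rw [bagP_succ, key1, key2]
  have expand : ((1:ℂ) + 1/(m:ℂ)) * (z + m) / ((m:ℂ) + 1) = 1 + z / m := by
    field_simp
    ring
  calc (m:ℂ) ^ (1-z) * (((1:ℂ) + 1/(m:ℂ)) * ((1:ℂ) + 1/(m:ℂ)) ^ (-z))
        * (bagP z m * (z + m) / (m + 1))
      = (m:ℂ) ^ (1-z) * bagP z m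
        * ((((1:ℂ) + 1/(m:ℂ)) * (z + m) / ((m:ℂ) + 1)) * ((1:ℂ) + 1/(m:ℂ)) ^ (-z)) := by
        ring
    _ = (m:ℂ) ^ (1-z) * bagP z m * ((1 + z/m) * ((1:ℂ) + 1/(m:ℂ)) ^ (-z)) := by
        rw [expand]

lemma a_tendsto {z : ℂ} (hG : Complex.Gamma z ≠ 0) :
    Tendsto (bagA z) atTop (nhds (Complex.Gamma z)⁻¹) := by
  have hzk : ∀ k : ℕ, z + k ≠ 0 := by
    intro k h
    apply hG
    rw [Complex.Gamma_eq_zero_iff]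
    exact ⟨k, by linear_combination h⟩
  have hGS : ∀ m : ℕ, 1 ≤ m → Complex.GammaSeq z m ≠ 0 := by
    intro m hm
    unfold Complex.GammaSeq
    apply div_ne_zero
    · apply mul_ne_zero
      · intro h
        rw [Complex.cpow_eq_zero_iff] at h
        exact (Nat.cast_ne_zero.mpr (by omega)) h.1
      · exact_mod_cast Nat.cast_ne_zero.mpr m.factorial_ne_zero
    · exact Finset.prod_ne_zero_iff.mpr (fun j _ => hzk j)
  have key : ∀ m : ℕ, 1 ≤ m →
      bagA z m = ((m:ℂ)/(z + m)) * (Complex.GammaSeq z m)⁻¹ := by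
    intro m hm
    have hmc : (m:ℂ) ≠ 0 := Nat.cast_ne_zero.mpr (by omega)
    have hprod : (∏ i ∈ Finset.range m, (z + i)) ≠ 0 :=
      Finset.prod_ne_zero_iff.mpr (fun j _ => hzk j)
    have hfac : ((m.factorial : ℂ)) ≠ 0 := Nat.cast_ne_zero.mpr m.factorial_ne_zero
    have huv : (m:ℂ) ^ (1 - z) * (m:ℂ) ^ z = (m:ℂ) := by
      rw [← Complex.cpow_add _ _ hmc]
      norm_num
    rw [eq_mul_inv_iff_mul_eq₀ (hGS m hm)]
    unfold bagA bagP Complex.GammaSeq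
    rw [Finset.prod_range_succ]
    have hzm := hzk m
    field_simp
    linear_combination huv
  have tinv : Tendsto (fun m : ℕ => ((m:ℂ))⁻¹) atTop (nhds 0) := by
    have h := tendsto_one_div_atTop_nhds_zero_nat (𝕜 := ℝ)
    have h2 := (Complex.continuous_ofReal.tendsto 0).comp h
    apply h2.congr
    intro m
    simp [Function.comp]
  have tg : Tendsto (fun m : ℕ => z * ((m:ℂ))⁻¹ + 1) atTop (nhds 1) := by
    have := (tinv.const_mul z).add_const 1
    simpa using this
  have tg' : Tendsto (fun m : ℕ => (z + m)/(m:ℂ)) atTop (nhds 1) := by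
    apply tg.congr'
    filter_upwards [eventually_ge_atTop 1] with m hm
    have hmc : (m:ℂ) ≠ 0 := Nat.cast_ne_zero.mpr (by omega)
    field_simp
  have t1 : Tendsto (fun m : ℕ => (m:ℂ)/(z + m)) atTop (nhds 1) := by
    have := tg'.inv₀ one_ne_zero
    simp only [inv_div, inv_one] at this
    exact this
  have tfull := t1.mul ((Complex.GammaSeq_tendsto_Gamma z).inv₀ hG)
  rw [one_mul] at tfull
  apply tfull.congr'
  filter_upwards [eventually_ge_atTop 1] with m hm
  exact (key m hm).symm

section Growth

variable {A : ℝ} {z : ℂ} {n : ℕ}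

lemma a_growth (hA : 0 < A) (hz : ‖z‖ ≤ A) (hn : 4 * (A+1)^2 ≤ (n:ℝ)) :
    ∀ m, n ≤ m → ‖bagA z m‖ ≤ ‖bagA z n‖ * Real.exp (4*(A+1)^2 * (1/n - 1/m)) := by
  intro m hm
  induction m, hm using Nat.le_induction with
  | base => simp
  | succ m hm ih =>
    have hA1 : (1:ℝ) ≤ 2*(A+1) := by nlinarith
    have hn2 : 2*(A+1) ≤ (n:ℝ) := by nlinarith
    have hmn : (n:ℝ) ≤ m := by exact_mod_cast hm
    have hm2 : 2*(A+1) ≤ (m:ℝ) := by linarith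
    have hm0 : (0:ℝ) < m := by linarith
    have hm1 : 1 ≤ m := by
      by_contra h
      push_neg at h
      interval_cases m
      · norm_num at hm0
    have hrec := bagA_succ z hm1
    have hrho := rho_est hA hz hm2
    have hnormrho : ‖(1 + z / m) * (1 + 1 / (m:ℂ)) ^ (-z)‖ ≤ 1 + 2*(A+1)^2/(m:ℝ)^2 := by
      calc ‖(1 + z / m) * (1 + 1 / (m:ℂ)) ^ (-z)‖
          ≤ ‖(1 + z / m) * (1 + 1 / (m:ℂ)) ^ (-z) - 1‖ + ‖(1:ℂ)‖ := by
            apply le_trans (le_of_eq (by ring_nf)) (norm_add_le _ _)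
        _ ≤ 2*(A+1)^2/(m:ℝ)^2 + 1 := by
            rw [norm_one]
            gcongr
        _ = 1 + 2*(A+1)^2/(m:ℝ)^2 := by ring
    have hexpstep : 1 + 2*(A+1)^2/(m:ℝ)^2 ≤ Real.exp (4*(A+1)^2 * (1/m - 1/(m+1))) := by
      have hfr : 2*(A+1)^2/(m:ℝ)^2 ≤ 4*(A+1)^2 * (1/m - 1/(m+1)) := by
        have he : (1:ℝ)/m - 1/(m+1) = 1/(m*(m+1)) := by
          field_simp
          ring
        rw [he, div_le_iff₀ (by positivity)]
        have : 4*(A+1)^2 * (1/((m:ℝ)*(m+1))) * m^2 = 4*(A+1)^2 * (m/(m+1)) := by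
          field_simp
        rw [this]
        have hmm : (1:ℝ)/2 ≤ (m:ℝ)/(m+1) := by
          rw [div_le_div_iff₀ (by norm_num) (by positivity)]
          linarith
        nlinarith [sq_nonneg (A+1)]
      calc 1 + 2*(A+1)^2/(m:ℝ)^2 ≤ 1 + 4*(A+1)^2 * (1/m - 1/(m+1)) := by linarith
        _ ≤ Real.exp (4*(A+1)^2 * (1/m - 1/(m+1))) := Real.add_one_le_exp _ |>.trans_eq' (by ring)
    calc ‖bagA z (m+1)‖ = ‖bagA z m‖ * ‖(1 + z / m) * (1 + 1 / (m:ℂ)) ^ (-z)‖ := by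
          rw [hrec, norm_mul]
      _ ≤ (‖bagA z n‖ * Real.exp (4*(A+1)^2 * (1/n - 1/m))) * (1 + 2*(A+1)^2/(m:ℝ)^2) := by
          apply mul_le_mul ih hnormrho (norm_nonneg _) (by positivity)
      _ ≤ (‖bagA z n‖ * Real.exp (4*(A+1)^2 * (1/n - 1/m)))
            * Real.exp (4*(A+1)^2 * (1/m - 1/(m+1))) := by
          apply mul_le_mul_of_nonneg_left hexpstep (by positivity)
      _ = ‖bagA z n‖ * Real.exp (4*(A+1)^2 * (1/n - 1/((m:ℝ)+1))) := by
          rw [mul_assoc, ← Real.exp_add]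
          congr 2
          ring
      _ = ‖bagA z n‖ * Real.exp (4*(A+1)^2 * (1/n - 1/((m+1:ℕ):ℝ))) := by push_cast; ring_nf


lemma a_growth' (hA : 0 < A) (hz : ‖z‖ ≤ A) (hn : 4 * (A+1)^2 ≤ (n:ℝ)) :
    ∀ m, n ≤ m → ‖bagA z m‖ ≤ Real.exp 1 * ‖bagA z n‖ := by
  intro m hm
  have hn0 : (0:ℝ) < n := by nlinarith
  have hm0 : (0:ℝ) < m := lt_of_lt_of_le hn0 (by exact_mod_cast hm)
  have h1 : 4*(A+1)^2 * (1/(n:ℝ) - 1/m) ≤ 1 := by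
    have h2 : (1:ℝ)/n - 1/m ≤ 1/n := by
      have : (0:ℝ) ≤ 1/m := by positivity
      linarith
    calc 4*(A+1)^2 * (1/(n:ℝ) - 1/m) ≤ 4*(A+1)^2 * (1/n) := by
          apply mul_le_mul_of_nonneg_left h2 (by positivity)
      _ ≤ 1 := by
          rw [mul_one_div, div_le_one hn0]
          exact hn
  calc ‖bagA z m‖ ≤ ‖bagA z n‖ * Real.exp (4*(A+1)^2 * (1/n - 1/m)) :=
        a_growth hA hz hn m hm
    _ ≤ ‖bagA z n‖ * Real.exp 1 := by
        apply mul_le_mul_of_nonneg_left (Real.exp_le_exp.mpr h1) (norm_nonneg _)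
    _ = Real.exp 1 * ‖bagA z n‖ := by ring

lemma a_diff (hA : 0 < A) (hz : ‖z‖ ≤ A) (hn : 4 * (A+1)^2 ≤ (n:ℝ)) :
    ∀ m, n ≤ m → ‖bagA z m - bagA z n‖
      ≤ Real.exp 1 * ‖bagA z n‖ * (4*(A+1)^2) * (1/n - 1/m) := by
  intro m hm
  induction m, hm using Nat.le_induction with
  | base => simp
  | succ m hm ih =>
    have hA1 : (1:ℝ) ≤ 2*(A+1) := by nlinarith
    have hn2 : 2*(A+1) ≤ (n:ℝ) := by nlinarith
    have hmn : (n:ℝ) ≤ m := by exact_mod_cast hm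
    have hm2 : 2*(A+1) ≤ (m:ℝ) := by linarith
    have hm0 : (0:ℝ) < m := by linarith
    have hn0 : (0:ℝ) < n := by nlinarith
    have hm1 : 1 ≤ m := by
      by_contra h
      push_neg at h
      interval_cases m
      · norm_num at hm0
    have hrec := bagA_succ z hm1
    have hrho := rho_est hA hz hm2
    have hstep : ‖bagA z (m+1) - bagA z m‖
        ≤ (Real.exp 1 * ‖bagA z n‖) * (2*(A+1)^2/(m:ℝ)^2) := by
      have : bagA z (m+1) - bagA z m
          = bagA z m * ((1 + z / m) * (1 + 1 / (m:ℂ)) ^ (-z) - 1) := by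
        rw [hrec]; ring
      rw [this, norm_mul]
      apply mul_le_mul (a_growth' hA hz hn m hm) hrho (norm_nonneg _) (by positivity)
    have hfr : 2*(A+1)^2/(m:ℝ)^2 ≤ 4*(A+1)^2 * (1/m - 1/(m+1)) := by
      have he : (1:ℝ)/m - 1/(m+1) = 1/(m*(m+1)) := by field_simp; ring
      rw [he, div_le_iff₀ (by positivity)]
      have heq : 4*(A+1)^2 * (1/((m:ℝ)*(m+1))) * m^2 = 4*(A+1)^2 * (m/(m+1)) := by
        field_simp
      rw [heq]
      have hmm : (1:ℝ)/2 ≤ (m:ℝ)/(m+1) := by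
        rw [div_le_div_iff₀ (by norm_num) (by positivity)]
        linarith
      nlinarith [sq_nonneg (A+1)]
    calc ‖bagA z (m+1) - bagA z n‖
        ≤ ‖bagA z (m+1) - bagA z m‖ + ‖bagA z m - bagA z n‖ := by
          apply le_trans (le_of_eq (by ring_nf)) (norm_add_le _ _)
      _ ≤ (Real.exp 1 * ‖bagA z n‖) * (2*(A+1)^2/(m:ℝ)^2)
            + Real.exp 1 * ‖bagA z n‖ * (4*(A+1)^2) * (1/n - 1/m) := add_le_add hstep ih
      _ ≤ (Real.exp 1 * ‖bagA z n‖) * (4*(A+1)^2 * (1/m - 1/((m:ℝ)+1)))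
            + Real.exp 1 * ‖bagA z n‖ * (4*(A+1)^2) * (1/n - 1/m) := by
          apply add_le_add_left
          apply mul_le_mul_of_nonneg_left hfr (by positivity)
      _ = Real.exp 1 * ‖bagA z n‖ * (4*(A+1)^2) * (1/n - 1/((m:ℝ)+1)) := by ring
      _ = Real.exp 1 * ‖bagA z n‖ * (4*(A+1)^2) * (1/n - 1/((m+1:ℕ):ℝ)) := by
          push_cast; ring_nf

lemma a_close (hA : 0 < A) (hz : ‖z‖ ≤ A) (hn : 4 * (A+1)^2 ≤ (n:ℝ))
    (hG : Complex.Gamma z ≠ 0) :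
    ‖(Complex.Gamma z)⁻¹ - bagA z n‖ ≤ Real.exp 1 * ‖bagA z n‖ * (4*(A+1)^2) * (1/n) := by
  have hn0 : (0:ℝ) < n := by nlinarith
  have hT : Tendsto (fun m => ‖bagA z m - bagA z n‖) atTop
      (nhds ‖(Complex.Gamma z)⁻¹ - bagA z n‖) :=
    ((a_tendsto hG).sub_const (bagA z n)).norm
  apply le_of_tendsto hT
  filter_upwards [eventually_ge_atTop n] with m hm
  have hm0 : (0:ℝ) < m := lt_of_lt_of_le hn0 (by exact_mod_cast hm)
  calc ‖bagA z m - bagA z n‖ ≤ Real.exp 1 * ‖bagA z n‖ * (4*(A+1)^2) * (1/n - 1/m) :=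
        a_diff hA hz hn m hm
    _ ≤ Real.exp 1 * ‖bagA z n‖ * (4*(A+1)^2) * (1/n) := by
        have h1 : (0:ℝ) ≤ 1/m := by positivity
        have h2 : (1:ℝ)/n - 1/m ≤ 1/n := by linarith
        apply mul_le_mul_of_nonneg_left h2 (by positivity)

lemma a_bound (hA : 0 < A) (hz : ‖z‖ ≤ A) (hn : 1 ≤ n) :
    ‖bagA z n‖ ≤ A * (n:ℝ) ^ (2*A + 1) := by
  have hn0 : (0:ℝ) < n := by exact_mod_cast hn
  have hn1 : (1:ℝ) ≤ n := by exact_mod_cast hn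
  have hre : -A ≤ z.re := by
    have h1 : |z.re| ≤ ‖z‖ := Complex.abs_re_le_norm z
    have := abs_le.mp (h1.trans hz)
    exact this.1
  have hcpow : ‖(n:ℂ) ^ ((1:ℂ) - z)‖ = (n:ℝ) ^ (1 - z.re) := by
    rw [show ((n:ℂ)) = (((n:ℝ)):ℂ) by push_cast; ring, 
      Complex.norm_cpow_eq_rpow_re_of_pos hn0]
    simp [Complex.sub_re]
  have hP : ‖bagP z n‖ ≤ A * (n:ℝ) ^ A := by
    have h := bagP_bound hA hz n hn
    have h2 : ‖bagP z n‖ ≤ A * (n:ℝ) ^ (A+1) / n := (le_div_iff₀ hn0).mpr h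
    have h3 : A * (n:ℝ) ^ (A+1) / n = A * (n:ℝ) ^ A := by
      rw [Real.rpow_add_one hn0.ne']
      field_simp
    rwa [h3] at h2
  calc ‖bagA z n‖ = ‖(n:ℂ) ^ ((1:ℂ) - z)‖ * ‖bagP z n‖ := by
        rw [bagA, norm_mul]
    _ ≤ (n:ℝ) ^ (1 - z.re) * (A * (n:ℝ) ^ A) := by
        rw [hcpow]
        apply mul_le_mul_of_nonneg_left hP (by positivity)
    _ ≤ (n:ℝ) ^ (1 + A) * (A * (n:ℝ) ^ A) := by
        apply mul_le_mul_of_nonneg_right _ (by positivity)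
        apply Real.rpow_le_rpow_of_exponent_le hn1
        linarith
    _ = A * (n:ℝ) ^ (2*A + 1) := by
        rw [show (n:ℝ)^(1+A) * (A*(n:ℝ)^A) = A * ((n:ℝ)^(1+A) * (n:ℝ)^A) by ring,
          ← Real.rpow_add hn0]
        ring_nf

end Growth



lemma expA_le {A : ℝ} (hA : 0 ≤ A) : Real.exp A ≤ Real.exp 1 * (A+1) ^ (2*A) := by
  rcases le_or_gt A 1 with h | h
  · have h1 : (1:ℝ) ≤ (A+1) ^ (2*A) := Real.one_le_rpow (by linarith) (by linarith)
    nlinarith [Real.exp_le_exp.mpr h, Real.exp_pos 1]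
  · have hlog : (1:ℝ)/2 ≤ Real.log (A+1) := by
      have h2 : Real.log 2 ≤ Real.log (A+1) := Real.log_le_log (by norm_num) (by linarith)
      nlinarith [Real.log_two_gt_d9]
    have : Real.exp A ≤ (A+1) ^ (2*A) := by
      rw [Real.rpow_def_of_pos (by linarith)]
      apply Real.exp_le_exp.mpr
      nlinarith
    nlinarith [Real.add_one_le_exp 1, Real.rpow_nonneg (show (0:ℝ) ≤ A+1 by linarith) (2*A)]

lemma poly_le {A k : ℝ} (hA : 0 ≤ A) (hk : 0 ≤ k) :
    (A+1) ^ k ≤ 2 ^ k * (A+1) ^ (k*A) := by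
  rcases le_or_gt A 1 with h | h
  · have h1 : (A+1 : ℝ) ^ k ≤ 2 ^ k := Real.rpow_le_rpow (by linarith) (by linarith) hk
    have h2 : (1:ℝ) ≤ (A+1) ^ (k*A) := Real.one_le_rpow (by linarith) (by positivity)
    nlinarith [Real.rpow_nonneg (show (0:ℝ) ≤ 2 by norm_num) k]
  · have h1 : (A+1 : ℝ) ^ k ≤ (A+1) ^ (k*A) :=
      Real.rpow_le_rpow_of_exponent_le (by linarith) (by nlinarith)
    have h2 : (1:ℝ) ≤ 2 ^ k := Real.one_le_rpow (by norm_num) hk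
    nlinarith [Real.rpow_nonneg (show (0:ℝ) ≤ A+1 by linarith) k]

lemma rpow_base_anti {x y c : ℝ} (hx : 1 ≤ x) (hxy : x ≤ y) (hc : c ≤ 0) : y ^ c ≤ x ^ c := by
  have hx0 : (0:ℝ) < x := by linarith
  have hy0 : (0:ℝ) < y := by linarith
  rw [show c = -(-c) by ring, Real.rpow_neg hy0.le, Real.rpow_neg hx0.le]
  apply inv_anti₀ (by positivity)
  exact Real.rpow_le_rpow hx0.le hxy (by linarith)

lemma exp16_le : Real.exp 16 ≤ 10^7 := by
  have h1 : Real.exp 16 = Real.exp 1 ^ (16:ℕ) := by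
    rw [← Real.exp_nat_mul]; norm_num
  rw [h1]
  calc Real.exp 1 ^ (16:ℕ) ≤ 2.7182818286 ^ (16:ℕ) := by
        apply pow_le_pow_left₀ (Real.exp_pos 1).le Real.exp_one_lt_d9.le
    _ ≤ 10^7 := by norm_num

lemma B_le {A : ℝ} (hA : 0 < A) :
    60*(A+1)^3 * (5*(A+1)^2) ^ (4*A+4) ≤ 10^13 * (A+1) ^ ((10:ℝ)^13 * A) := by
  have ht0 : (0:ℝ) < A + 1 := by linarith
  have ht1 : (1:ℝ) ≤ A + 1 := by linarith
  have hexp40 : (0:ℝ) ≤ 4*A+4 := by linarith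
  have s1 : (5*(A+1)^2) ^ (4*A+4) = 5 ^ (4*A+4) * ((A+1)^(2:ℕ)) ^ (4*A+4) :=
    Real.mul_rpow (by norm_num) (by positivity)
  have s2 : ((A+1)^(2:ℕ)) ^ (4*A+4) = (A+1) ^ (8*A+8) := by
    rw [← Real.rpow_natCast (A+1) 2, ← Real.rpow_mul ht0.le]
    congr 1
    norm_num
    ring
  have h5 : (5:ℝ) ≤ Real.exp 2 := by
    have he2 : Real.exp 2 = Real.exp 1 * Real.exp 1 := by
      rw [← Real.exp_add]; norm_num
    nlinarith [Real.exp_one_gt_d9]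
  have s3 : (5:ℝ) ^ (4*A+4) ≤ Real.exp (8*A+8) := by
    calc (5:ℝ) ^ (4*A+4) ≤ (Real.exp 2) ^ (4*A+4) :=
          Real.rpow_le_rpow (by norm_num) h5 hexp40
      _ = Real.exp (2*(4*A+4)) := by
          rw [← Real.exp_one_rpow 2, ← Real.rpow_mul (Real.exp_pos 1).le,
            Real.exp_one_rpow]
      _ = Real.exp (8*A+8) := by ring_nf
  have s5 : Real.exp (8*A) ≤ Real.exp 8 * (A+1) ^ (16*A) := by
    have h8 : Real.exp (8*A) = Real.exp A ^ (8:ℕ) := by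
      rw [← Real.exp_nat_mul]; norm_num
    have h9 : Real.exp A ^ (8:ℕ) ≤ (Real.exp 1 * (A+1) ^ (2*A)) ^ (8:ℕ) :=
      pow_le_pow_left₀ (Real.exp_pos A).le (expA_le hA.le) 8
    have h10 : (Real.exp 1 * (A+1) ^ (2*A)) ^ (8:ℕ)
        = Real.exp 8 * (A+1) ^ (16*A) := by
      rw [mul_pow, ← Real.rpow_natCast ((A+1) ^ (2*A)) 8, ← Real.rpow_mul ht0.le]
      norm_num
      rw [show 2*A*8 = 16*A by ring]
    rw [h8, ← h10]
    exact h9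
  have s6 : (A+1 : ℝ) ^ (8*A+8) = (A+1) ^ (8*A) * (A+1) ^ (8:ℝ) :=
    Real.rpow_add ht0 _ _
  have s7 : (A+1 : ℝ) ^ (8:ℝ) ≤ 2 ^ (8:ℝ) * (A+1) ^ (8*A) := poly_le hA.le (by norm_num)
  have s8 : (A+1 : ℝ) ^ (3:ℕ) ≤ 2 ^ (3:ℝ) * (A+1) ^ (3*A) := by
    rw [← Real.rpow_natCast (A+1) 3]
    have := poly_le (k := 3) hA.le (by norm_num)
    convert this using 3 <;> norm_num
  have hrw : 60*(A+1)^3 * (5*(A+1)^2) ^ (4*A+4)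
      = 60 * (A+1)^(3:ℕ) * (5 ^ (4*A+4) * ((A+1) ^ (8*A) * (A+1) ^ (8:ℝ))) := by
    rw [s1, s2, s6]
  have step : 60 * ((A+1):ℝ)^(3:ℕ) * (5 ^ (4*A+4) * ((A+1) ^ (8*A) * (A+1) ^ (8:ℝ)))
      ≤ 60 * (2 ^ (3:ℝ) * (A+1) ^ (3*A))
        * (Real.exp (8*A+8) * ((A+1) ^ (8*A) * (2 ^ (8:ℝ) * (A+1) ^ (8*A)))) := by
    have p1 : (0:ℝ) ≤ (A+1) ^ (8*A) := by positivity
    gcongr <;> first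
      | exact s8
      | exact s3
      | exact s7
      | positivity
  have merge : 60 * ((2:ℝ) ^ (3:ℝ) * (A+1) ^ (3*A))
        * (Real.exp (8*A+8) * ((A+1) ^ (8*A) * (2 ^ (8:ℝ) * (A+1) ^ (8*A))))
      ≤ 122880 * Real.exp 16 * (A+1) ^ (35*A) := by
    have e1 : Real.exp (8*A+8) = Real.exp (8*A) * Real.exp 8 := by
      rw [← Real.exp_add]
    have e2 : Real.exp (8*A) * Real.exp 8 ≤ (Real.exp 8 * (A+1) ^ (16*A)) * Real.exp 8 := by
      apply mul_le_mul_of_nonneg_right s5 (Real.exp_pos 8).le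
    have e3 : Real.exp 8 * Real.exp 8 = Real.exp 16 := by
      rw [← Real.exp_add]; norm_num
    have e4 : (2:ℝ) ^ (3:ℝ) = 8 := by
      rw [show (3:ℝ) = ((3:ℕ):ℝ) by norm_num, Real.rpow_natCast]; norm_num
    have e5 : (2:ℝ) ^ (8:ℝ) = 256 := by
      rw [show (8:ℝ) = ((8:ℕ):ℝ) by norm_num, Real.rpow_natCast]; norm_num
    have e6 : (A+1:ℝ) ^ (3*A) * ((A+1) ^ (16*A) * ((A+1) ^ (8*A) * (A+1) ^ (8*A)))
        = (A+1) ^ (35*A) := by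
      rw [← Real.rpow_add ht0, ← Real.rpow_add ht0, ← Real.rpow_add ht0]
      congr 1
      ring
    calc 60 * ((2:ℝ) ^ (3:ℝ) * (A+1) ^ (3*A))
          * (Real.exp (8*A+8) * ((A+1) ^ (8*A) * (2 ^ (8:ℝ) * (A+1) ^ (8*A))))
        = 60 * (8 * (A+1) ^ (3*A))
          * ((Real.exp (8*A) * Real.exp 8) * ((A+1) ^ (8*A) * (256 * (A+1) ^ (8*A)))) := by
          rw [e1, e4, e5]
      _ ≤ 60 * (8 * (A+1) ^ (3*A))
          * (((Real.exp 8 * (A+1) ^ (16*A)) * Real.exp 8)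
            * ((A+1) ^ (8*A) * (256 * (A+1) ^ (8*A)))) := by
          have hp : (0:ℝ) ≤ 60 * (8 * (A+1) ^ (3*A)) := by positivity
          apply mul_le_mul_of_nonneg_left _ hp
          apply mul_le_mul_of_nonneg_right e2 (by positivity)
      _ = 122880 * Real.exp 16
            * ((A+1) ^ (3*A) * ((A+1) ^ (16*A) * ((A+1) ^ (8*A) * (A+1) ^ (8*A)))) := by
          rw [← e3]; ring
      _ = 122880 * Real.exp 16 * (A+1) ^ (35*A) := by rw [e6]
  have last : (122880:ℝ) * Real.exp 16 * (A+1) ^ (35*A) ≤ 10^13 * (A+1) ^ ((10:ℝ)^13 * A) := by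
    have l1 : (122880:ℝ) * Real.exp 16 ≤ 10^13 := by
      nlinarith [exp16_le]
    have l2 : (A+1:ℝ) ^ (35*A) ≤ (A+1) ^ ((10:ℝ)^13 * A) := by
      apply Real.rpow_le_rpow_of_exponent_le ht1
      nlinarith
    have l3 : (0:ℝ) ≤ (A+1) ^ (35*A) := by positivity
    nlinarith [Real.rpow_nonneg ht0.le ((10:ℝ)^13 * A), exp16_le]
  calc 60*(A+1)^3 * (5*(A+1)^2) ^ (4*A+4)
      = 60 * (A+1)^(3:ℕ) * (5 ^ (4*A+4) * ((A+1) ^ (8*A) * (A+1) ^ (8:ℝ))) := hrw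
    _ ≤ 60 * (2 ^ (3:ℝ) * (A+1) ^ (3*A))
        * (Real.exp (8*A+8) * ((A+1) ^ (8*A) * (2 ^ (8:ℝ) * (A+1) ^ (8*A)))) := step
    _ ≤ 122880 * Real.exp 16 * (A+1) ^ (35*A) := merge
    _ ≤ 10^13 * (A+1) ^ ((10:ℝ)^13 * A) := last


set_option maxHeartbeats 2000000 in
/-- There is an absolute constant `C` such that for all `A > 0`, `|z| ≤ A` and `n ≥ 1`,
`|binom(n+z−1, n) − n^{z−1}/Γ(z)| ≤ C(A+1)^{CA} n^{Re z − 2}`, where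
`binom(n+z−1,n) = z(z+1)⋯(z+n−1)/n!`. -/
theorem binom_approx_gamma :
    ∃ C : ℝ, 0 < C ∧ ∀ A : ℝ, 0 < A → ∀ z : ℂ, ‖z‖ ≤ A → ∀ n : ℕ, 1 ≤ n →
      ‖(∏ i ∈ Finset.range n, (z + i)) / (n.factorial : ℂ)
          - (n : ℂ) ^ (z - 1) / Complex.Gamma z‖
        ≤ C * (A + 1) ^ (C * A) * (n : ℝ) ^ (z.re - 2) := by
  refine ⟨(10:ℝ)^13, by positivity, ?_⟩
  intro A hA z hz n hn
  have hgoal : (∏ i ∈ Finset.range n, (z + i)) / (n.factorial : ℂ) = bagP z n := rfl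
  rw [hgoal]
  set N : ℕ := ⌈4*(A+1)^2⌉₊ with hNdef
  have hNreal : 4*(A+1)^2 ≤ (N:ℝ) := Nat.le_ceil _
  have hA1 : (1:ℝ) ≤ (A+1)^2 := by nlinarith
  have hNle : (N:ℝ) ≤ 5*(A+1)^2 := by
    have h := Nat.ceil_lt_add_one (show (0:ℝ) ≤ 4*(A+1)^2 by positivity)
    rw [← hNdef] at h
    nlinarith
  have hN0 : (0:ℝ) < N := by nlinarith
  have hN1 : 1 ≤ N := by exact_mod_cast Nat.one_le_cast.mpr (by exact_mod_cast hN0)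
  have hNbig1 : (1:ℝ) ≤ N := by nlinarith
  have hre : -A ≤ z.re ∧ z.re ≤ A := by
    have h1 : |z.re| ≤ ‖z‖ := Complex.abs_re_le_norm z
    exact abs_le.mp (h1.trans hz)
  have hn0 : (0:ℝ) < n := by exact_mod_cast hn
  have hn1 : (1:ℝ) ≤ n := by exact_mod_cast hn
  have haN : ‖bagA z N‖ ≤ A * (N:ℝ) ^ (2*A+1) := a_bound hA hz hN1
  have hradN : 4*(A+1)^2 * (1/(N:ℝ)) ≤ 1 := by
    rw [mul_one_div, div_le_one hN0]
    exact hNreal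
  have hexp1 : Real.exp 1 ≤ 3 := by nlinarith [Real.exp_one_lt_d9]
  have hexp1' : (1:ℝ) ≤ Real.exp 1 := by nlinarith [Real.exp_one_gt_d9]
  -- bound on the inverse Gamma
  have hGinv : ‖(Complex.Gamma z)⁻¹‖ ≤ 4 * (A * (N:ℝ) ^ (2*A+1)) := by
    by_cases hG : Complex.Gamma z = 0
    · rw [hG]
      simp only [inv_zero, norm_zero]
      positivity
    · have hclose := a_close hA hz hNreal hG
      have h1 : ‖(Complex.Gamma z)⁻¹‖ ≤ ‖(Complex.Gamma z)⁻¹ - bagA z N‖ + ‖bagA z N‖ := by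
        calc ‖(Complex.Gamma z)⁻¹‖ = ‖((Complex.Gamma z)⁻¹ - bagA z N) + bagA z N‖ := by
              ring_nf
          _ ≤ _ := norm_add_le _ _
      have h2 : ‖(Complex.Gamma z)⁻¹ - bagA z N‖ ≤ 3 * ‖bagA z N‖ := by
        calc ‖(Complex.Gamma z)⁻¹ - bagA z N‖
            ≤ Real.exp 1 * ‖bagA z N‖ * (4*(A+1)^2) * (1/(N:ℝ)) := hclose
          _ = Real.exp 1 * ‖bagA z N‖ * (4*(A+1)^2 * (1/(N:ℝ))) := by ring
          _ ≤ Real.exp 1 * ‖bagA z N‖ * 1 := by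
              apply mul_le_mul_of_nonneg_left hradN (by positivity)
          _ ≤ 3 * ‖bagA z N‖ := by
              rw [mul_one]
              apply mul_le_mul_of_nonneg_right hexp1 (norm_nonneg _)
      calc ‖(Complex.Gamma z)⁻¹‖ ≤ 3 * ‖bagA z N‖ + ‖bagA z N‖ := by linarith
        _ = 4 * ‖bagA z N‖ := by ring
        _ ≤ 4 * (A * (N:ℝ) ^ (2*A+1)) := by linarith [haN]
  -- the final constant bound
  have hBfin : 60*(A+1)^3 * (5*(A+1)^2) ^ (4*A+4) ≤ (10:ℝ)^13 * (A+1) ^ ((10:ℝ)^13 * A) :=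
    B_le hA
  have hNrp : ∀ r s : ℝ, 0 ≤ r → r ≤ s → (N:ℝ) ^ r ≤ (5*(A+1)^2) ^ s := by
    intro r s hr hrs
    calc (N:ℝ) ^ r ≤ (5*(A+1)^2) ^ r := Real.rpow_le_rpow hN0.le hNle hr
      _ ≤ (5*(A+1)^2) ^ s := Real.rpow_le_rpow_of_exponent_le (by nlinarith) hrs
  have hrpow_pos : (0:ℝ) < (n:ℝ) ^ (z.re - 2) := Real.rpow_pos_of_pos hn0 _
  by_cases hcase : N ≤ n
  · -- main case : n large
    have hn4 : 4*(A+1)^2 ≤ (n:ℝ) := hNreal.trans (by exact_mod_cast hcase)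
    by_cases hG : Complex.Gamma z = 0
    · obtain ⟨m, hm⟩ := (Complex.Gamma_eq_zero_iff z).mp hG
      have hmA : (m:ℝ) ≤ A := by
        have h1 : ‖z‖ = m := by rw [hm]; simp
        linarith [hz, h1.symm.le.trans hz]
      have hmn : m < n := by
        have : (m:ℝ) < n := by nlinarith
        exact_mod_cast this
      have hP0 : bagP z n = 0 := by
        unfold bagP
        rw [Finset.prod_eq_zero (Finset.mem_range.mpr hmn) (by rw [hm]; ring)]
        simp
      rw [hP0, hG, div_zero, sub_zero, norm_zero]
      positivity
    · have hclose := a_close hA hz hn4 hG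
      have hcn : (n:ℂ) ≠ 0 := Nat.cast_ne_zero.mpr (by omega)
      have h1 : (n:ℂ) ^ (z-1) * (n:ℂ) ^ ((1:ℂ)-z) = 1 := by
        rw [← Complex.cpow_add _ _ hcn]
        norm_num
      have key : bagP z n - (n:ℂ) ^ (z-1) / Complex.Gamma z
          = (n:ℂ) ^ (z-1) * (bagA z n - (Complex.Gamma z)⁻¹) := by
        rw [div_eq_mul_inv]
        unfold bagA
        linear_combination (-(bagP z n)) * h1
      have hcpow : ‖(n:ℂ) ^ (z-1)‖ = (n:ℝ) ^ (z.re - 1) := by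
        rw [show ((n:ℂ)) = (((n:ℝ)):ℂ) by push_cast; ring, 
          Complex.norm_cpow_eq_rpow_re_of_pos hn0]
        simp [Complex.sub_re]
      have hgrow : ‖bagA z n‖ ≤ Real.exp 1 * ‖bagA z N‖ := a_growth' hA hz hNreal n hcase
      have hstep : ‖bagA z n - (Complex.Gamma z)⁻¹‖
          ≤ Real.exp 1 * (Real.exp 1 * (A * (N:ℝ) ^ (2*A+1))) * (4*(A+1)^2) * (1/(n:ℝ)) := by
        rw [norm_sub_rev]
        calc ‖(Complex.Gamma z)⁻¹ - bagA z n‖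
            ≤ Real.exp 1 * ‖bagA z n‖ * (4*(A+1)^2) * (1/(n:ℝ)) := hclose
          _ ≤ Real.exp 1 * (Real.exp 1 * (A * (N:ℝ) ^ (2*A+1))) * (4*(A+1)^2) * (1/(n:ℝ)) := by
              have hb : ‖bagA z n‖ ≤ Real.exp 1 * (A * (N:ℝ) ^ (2*A+1)) := by
                calc ‖bagA z n‖ ≤ Real.exp 1 * ‖bagA z N‖ := hgrow
                  _ ≤ Real.exp 1 * (A * (N:ℝ) ^ (2*A+1)) := by
                      apply mul_le_mul_of_nonneg_left haN (Real.exp_pos 1).le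
              gcongr
      have hpow2 : (n:ℝ) ^ (z.re - 1) * (1/(n:ℝ)) = (n:ℝ) ^ (z.re - 2) := by
        rw [show z.re - 2 = (z.re - 1) + (-1) by ring, Real.rpow_add hn0,
          Real.rpow_neg_one]
        ring
      have hKbound : Real.exp 1 * (Real.exp 1 * (A * (N:ℝ) ^ (2*A+1))) * (4*(A+1)^2)
          ≤ 60*(A+1)^3 * (5*(A+1)^2) ^ (4*A+4) := by
        have hNp : (N:ℝ) ^ (2*A+1) ≤ (5*(A+1)^2) ^ (4*A+4) :=
          hNrp (2*A+1) (4*A+4) (by linarith) (by linarith)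
        have hprod : Real.exp 1 * Real.exp 1 * 4 ≤ 36 := by nlinarith
        have hAcube : A * (A+1)^2 ≤ (A+1)^3 := by nlinarith
        have hrp0 : (0:ℝ) ≤ (N:ℝ) ^ (2*A+1) := by positivity
        calc Real.exp 1 * (Real.exp 1 * (A * (N:ℝ) ^ (2*A+1))) * (4*(A+1)^2)
            = (Real.exp 1 * Real.exp 1 * 4) * (A * (A+1)^2) * (N:ℝ) ^ (2*A+1) := by ring
          _ ≤ 36 * (A+1)^3 * (5*(A+1)^2) ^ (4*A+4) := by
              apply mul_le_mul _ hNp hrp0 (by positivity)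
              apply mul_le_mul hprod hAcube (by positivity) (by norm_num)
          _ ≤ 60*(A+1)^3 * (5*(A+1)^2) ^ (4*A+4) := by
              have : (0:ℝ) ≤ (A+1)^3 * (5*(A+1)^2) ^ (4*A+4) := by positivity
              nlinarith
      calc ‖bagP z n - (n:ℂ) ^ (z-1) / Complex.Gamma z‖
          = (n:ℝ) ^ (z.re - 1) * ‖bagA z n - (Complex.Gamma z)⁻¹‖ := by
            rw [key, norm_mul, hcpow]
        _ ≤ (n:ℝ) ^ (z.re - 1) * (Real.exp 1 * (Real.exp 1 * (A * (N:ℝ) ^ (2*A+1)))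
              * (4*(A+1)^2) * (1/(n:ℝ))) := by
            apply mul_le_mul_of_nonneg_left hstep (by positivity)
        _ = (Real.exp 1 * (Real.exp 1 * (A * (N:ℝ) ^ (2*A+1))) * (4*(A+1)^2))
              * ((n:ℝ) ^ (z.re - 1) * (1/(n:ℝ))) := by ring
        _ = (Real.exp 1 * (Real.exp 1 * (A * (N:ℝ) ^ (2*A+1))) * (4*(A+1)^2))
              * (n:ℝ) ^ (z.re - 2) := by rw [hpow2]
        _ ≤ (60*(A+1)^3 * (5*(A+1)^2) ^ (4*A+4)) * (n:ℝ) ^ (z.re - 2) := by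
            apply mul_le_mul_of_nonneg_right hKbound hrpow_pos.le
        _ ≤ ((10:ℝ)^13 * (A+1) ^ ((10:ℝ)^13 * A)) * (n:ℝ) ^ (z.re - 2) := by
            apply mul_le_mul_of_nonneg_right hBfin hrpow_pos.le
        _ = (10:ℝ)^13 * (A+1) ^ ((10:ℝ)^13 * A) * (n:ℝ) ^ (z.re - 2) := by ring
  · -- crude case : n small
    push_neg at hcase
    have hnN : (n:ℝ) ≤ N := by exact_mod_cast hcase.le
    have hPb : ‖bagP z n‖ ≤ A * (N:ℝ) ^ A := by
      have h := bagP_bound hA hz n hn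
      have h2 : ‖bagP z n‖ ≤ A * (n:ℝ) ^ (A+1) / n := (le_div_iff₀ hn0).mpr h
      have h3 : A * (n:ℝ) ^ (A+1) / n = A * (n:ℝ) ^ A := by
        rw [Real.rpow_add_one hn0.ne']
        field_simp
      rw [h3] at h2
      calc ‖bagP z n‖ ≤ A * (n:ℝ) ^ A := h2
        _ ≤ A * (N:ℝ) ^ A := by
            apply mul_le_mul_of_nonneg_left (Real.rpow_le_rpow hn0.le hnN hA.le) hA.le
    have hcpow : ‖(n:ℂ) ^ (z-1)‖ = (n:ℝ) ^ (z.re - 1) := by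
      rw [show ((n:ℂ)) = (((n:ℝ)):ℂ) by push_cast; ring, 
        Complex.norm_cpow_eq_rpow_re_of_pos hn0]
      simp [Complex.sub_re]
    have hcp2 : (n:ℝ) ^ (z.re - 1) ≤ (N:ℝ) ^ A := by
      calc (n:ℝ) ^ (z.re - 1) ≤ (n:ℝ) ^ A :=
            Real.rpow_le_rpow_of_exponent_le hn1 (by linarith [hre.2])
        _ ≤ (N:ℝ) ^ A := Real.rpow_le_rpow hn0.le hnN hA.le
    have hD : ‖bagP z n - (n:ℂ) ^ (z-1) / Complex.Gamma z‖ ≤ 5 * A * (N:ℝ) ^ (3*A+1) := by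
      have hsplit : ‖bagP z n - (n:ℂ) ^ (z-1) / Complex.Gamma z‖
          ≤ ‖bagP z n‖ + ‖(n:ℂ) ^ (z-1)‖ * ‖(Complex.Gamma z)⁻¹‖ := by
        calc ‖bagP z n - (n:ℂ) ^ (z-1) / Complex.Gamma z‖
            ≤ ‖bagP z n‖ + ‖(n:ℂ) ^ (z-1) / Complex.Gamma z‖ := norm_sub_le _ _
          _ = ‖bagP z n‖ + ‖(n:ℂ) ^ (z-1)‖ * ‖(Complex.Gamma z)⁻¹‖ := by
              rw [div_eq_mul_inv, norm_mul]
      have hmerge : (N:ℝ) ^ A * (N:ℝ) ^ (2*A+1) = (N:ℝ) ^ (3*A+1) := by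
        rw [← Real.rpow_add hN0]
        congr 1
        ring
      have hNA : (N:ℝ) ^ A ≤ (N:ℝ) ^ (3*A+1) :=
        Real.rpow_le_rpow_of_exponent_le hNbig1 (by linarith)
      calc ‖bagP z n - (n:ℂ) ^ (z-1) / Complex.Gamma z‖
          ≤ ‖bagP z n‖ + ‖(n:ℂ) ^ (z-1)‖ * ‖(Complex.Gamma z)⁻¹‖ := hsplit
        _ ≤ A * (N:ℝ) ^ A + (N:ℝ) ^ A * (4 * (A * (N:ℝ) ^ (2*A+1))) := by
            apply add_le_add hPb
            rw [hcpow]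
            apply mul_le_mul hcp2 hGinv (norm_nonneg _) (by positivity)
        _ = A * (N:ℝ) ^ A + 4 * A * ((N:ℝ) ^ A * (N:ℝ) ^ (2*A+1)) := by ring
        _ = A * (N:ℝ) ^ A + 4 * A * (N:ℝ) ^ (3*A+1) := by rw [hmerge]
        _ ≤ A * (N:ℝ) ^ (3*A+1) + 4 * A * (N:ℝ) ^ (3*A+1) := by
            have := mul_le_mul_of_nonneg_left hNA hA.le
            linarith
        _ = 5 * A * (N:ℝ) ^ (3*A+1) := by ring
    -- compare n^(z.re-2) with N^(-(A+2))
    have hcomp : (N:ℝ) ^ (-(A+2)) ≤ (n:ℝ) ^ (z.re - 2) := by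
      calc (N:ℝ) ^ (-(A+2)) ≤ (n:ℝ) ^ (-(A+2)) :=
            rpow_base_anti hn1 hnN (by linarith)
        _ ≤ (n:ℝ) ^ (z.re - 2) :=
            Real.rpow_le_rpow_of_exponent_le hn1 (by linarith [hre.1])
    have hmerge2 : 5 * A * (N:ℝ) ^ (3*A+1)
        = (5 * A * (N:ℝ) ^ (4*A+3)) * (N:ℝ) ^ (-(A+2)) := by
      rw [mul_assoc (5*A), ← Real.rpow_add hN0]
      congr 2
      ring
    have hK2 : 5 * A * (N:ℝ) ^ (4*A+3) ≤ 60*(A+1)^3 * (5*(A+1)^2) ^ (4*A+4) := by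
      have hNp : (N:ℝ) ^ (4*A+3) ≤ (5*(A+1)^2) ^ (4*A+4) :=
        hNrp (4*A+3) (4*A+4) (by linarith) (by linarith)
      have hA3 : 5 * A ≤ 60*(A+1)^3 := by nlinarith
      apply mul_le_mul hA3 hNp (by positivity) (by positivity)
    calc ‖bagP z n - (n:ℂ) ^ (z-1) / Complex.Gamma z‖
        ≤ 5 * A * (N:ℝ) ^ (3*A+1) := hD
      _ = (5 * A * (N:ℝ) ^ (4*A+3)) * (N:ℝ) ^ (-(A+2)) := hmerge2
      _ ≤ (5 * A * (N:ℝ) ^ (4*A+3)) * (n:ℝ) ^ (z.re - 2) := by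
          apply mul_le_mul_of_nonneg_left hcomp (by positivity)
      _ ≤ (60*(A+1)^3 * (5*(A+1)^2) ^ (4*A+4)) * (n:ℝ) ^ (z.re - 2) := by
          apply mul_le_mul_of_nonneg_right hK2 hrpow_pos.le
      _ ≤ ((10:ℝ)^13 * (A+1) ^ ((10:ℝ)^13 * A)) * (n:ℝ) ^ (z.re - 2) := by
          apply mul_le_mul_of_nonneg_right hBfin hrpow_pos.le
      _ = (10:ℝ)^13 * (A+1) ^ ((10:ℝ)^13 * A) * (n:ℝ) ^ (z.re - 2) := by ring
end

section
/- Let q ≥ 2 be a prime power and x a real number with 1 ≤ x < q. Then h_q(x) := ∏_{P} (1 − x/|P|)^{−1} (1 − 1/|P|)^x, the product over all monic irreducible polynomials P over F_q with |P| = q^{deg P}, satisfies h_q(x) ≥ 1 + (x−1)/(2q); in particular h_q(x) ≥ 1. -/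
open Polynomial


private lemma kfun_hasDeriv {v : ℝ} (hv : 1 - v ≠ 0) :
    HasDerivAt (fun w : ℝ => Real.log (1 - w) + w / (1 - w) - w ^ 2 / 2)
      ((-1) / (1 - v) + (1 * (1 - v) - v * (-1)) / (1 - v) ^ 2 - 2 * v / 2) v := by
  have h1 : HasDerivAt (fun w : ℝ => 1 - w) (-1) v := by
    simpa using (hasDerivAt_id' v).const_sub (1 : ℝ)
  have h2 : HasDerivAt (fun w : ℝ => Real.log (1 - w)) ((-1) / (1 - v)) v := h1.log hv
  have h3 : HasDerivAt (fun w : ℝ => w / (1 - w)) ((1 * (1 - v) - v * (-1)) / (1 - v) ^ 2) v :=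
    (hasDerivAt_id v).div h1 hv
  have h4 : HasDerivAt (fun w : ℝ => w ^ 2 / 2) (2 * v / 2) v := by
    simpa using (hasDerivAt_pow 2 v).div_const 2
  exact (h2.add h3).sub h4

private lemma aux_K {u : ℝ} (hu0 : 0 ≤ u) (hu2 : u ≤ 1 / 2) :
    u ^ 2 / 2 ≤ Real.log (1 - u) + u / (1 - u) := by
  have hne : ∀ v : ℝ, v ≤ 1 / 2 → 1 - v ≠ 0 := fun v hv => by intro h; linarith [h]
  have hmono : MonotoneOn (fun w : ℝ => Real.log (1 - w) + w / (1 - w) - w ^ 2 / 2)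
      (Set.Icc (0 : ℝ) (1 / 2)) := by
    apply monotoneOn_of_deriv_nonneg (convex_Icc _ _)
    · intro v hv
      exact (kfun_hasDeriv (hne v hv.2)).continuousAt.continuousWithinAt
    · rw [interior_Icc]
      intro v hv
      exact (kfun_hasDeriv (hne v hv.2.le)).differentiableAt.differentiableWithinAt
    · rw [interior_Icc]
      intro v hv
      rw [(kfun_hasDeriv (hne v hv.2.le)).deriv]
      have h1 : 0 < 1 - v := by linarith [hv.2]
      have h0 : 0 < v := hv.1
      have key : (-1) / (1 - v) + (1 * (1 - v) - v * (-1)) / (1 - v) ^ 2 - 2 * v / 2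
          = v * (1 - (1 - v) ^ 2) / (1 - v) ^ 2 := by
        field_simp
        ring
      rw [key]
      apply div_nonneg _ (by positivity)
      have hsq : (1 - v) ^ 2 ≤ 1 := by nlinarith
      exact mul_nonneg h0.le (by linarith)
  have h01 : (0 : ℝ) ∈ Set.Icc (0 : ℝ) (1 / 2) := by constructor <;> norm_num
  have hu : u ∈ Set.Icc (0 : ℝ) (1 / 2) := ⟨hu0, hu2⟩
  have := hmono h01 hu hu0
  simp only [Real.log_one, sub_zero, zero_div, zero_pow, add_zero] at this
  norm_num at this
  linarith

private lemma aux_L1 {u x : ℝ} (hu0 : 0 < u) (hu2 : u ≤ 1 / 2) (hx1 : 1 ≤ x)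
    (hxu : x * u < 1) :
    (x - 1) * u ^ 2 / 2 ≤ x * Real.log (1 - u) - Real.log (1 - x * u) := by
  have hderiv : ∀ y ∈ Set.Icc (1 : ℝ) x,
      HasDerivAt (fun y : ℝ => y * Real.log (1 - u) - Real.log (1 - y * u) - (y - 1) * u ^ 2 / 2)
        (Real.log (1 - u) - (-u) / (1 - y * u) - u ^ 2 / 2) y := by
    intro y hy
    have hyu : 1 - y * u ≠ 0 := by
      have : y * u ≤ x * u := mul_le_mul_of_nonneg_right hy.2 hu0.le
      intro h; nlinarith
    have h1 : HasDerivAt (fun y : ℝ => y * Real.log (1 - u)) (Real.log (1 - u)) y := by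
      simpa using (hasDerivAt_id y).mul_const (Real.log (1 - u))
    have h2 : HasDerivAt (fun y : ℝ => 1 - y * u) (-u) y := by
      simpa using ((hasDerivAt_id y).mul_const u).const_sub 1
    have h3 : HasDerivAt (fun y : ℝ => Real.log (1 - y * u)) ((-u) / (1 - y * u)) y := h2.log hyu
    have h4 : HasDerivAt (fun y : ℝ => (y - 1) * u ^ 2 / 2) (u ^ 2 / 2) y := by
      simpa using (((hasDerivAt_id y).sub_const 1).mul_const (u ^ 2)).div_const 2
    exact (h1.sub h3).sub h4
  have hmono : MonotoneOn
      (fun y : ℝ => y * Real.log (1 - u) - Real.log (1 - y * u) - (y - 1) * u ^ 2 / 2)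
      (Set.Icc (1 : ℝ) x) := by
    apply monotoneOn_of_deriv_nonneg (convex_Icc _ _)
    · intro y hy
      exact (hderiv y hy).continuousAt.continuousWithinAt
    · rw [interior_Icc]
      intro y hy
      exact (hderiv y (Set.mem_Icc_of_Ioo hy)).differentiableAt.differentiableWithinAt
    · rw [interior_Icc]
      intro y hy
      rw [(hderiv y (Set.mem_Icc_of_Ioo hy)).deriv]
      have hy1 : 1 ≤ y := hy.1.le
      have hyu1 : 0 < 1 - y * u := by
        have : y * u ≤ x * u := mul_le_mul_of_nonneg_right hy.2.le hu0.le
        linarith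
      have h5 : 1 - y * u ≤ 1 - u := by nlinarith
      have h6 : u / (1 - u) ≤ u / (1 - y * u) := by
        apply div_le_div_of_nonneg_left hu0.le hyu1 h5
      have hK := aux_K hu0.le hu2
      have heq : Real.log (1 - u) - (-u) / (1 - y * u) - u ^ 2 / 2
          = Real.log (1 - u) + u / (1 - y * u) - u ^ 2 / 2 := by ring
      rw [heq]
      linarith
  have h1x := hmono (Set.mem_Icc.2 ⟨le_refl 1, hx1⟩) (Set.mem_Icc.2 ⟨hx1, le_refl x⟩) hx1
  simp only at h1x
  have hg1 : (1 : ℝ) * Real.log (1 - u) - Real.log (1 - 1 * u) - (1 - 1) * u ^ 2 / 2 = 0 := by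
    norm_num
  rw [hg1] at h1x
  linarith

private lemma multipliable_exp_of_summable {ι : Type*} {g : ι → ℝ} (h : Summable g) :
    Multipliable fun i => Real.exp (g i) := by
  obtain ⟨a, ha⟩ := h
  refine ⟨Real.exp a, ?_⟩
  have := (Real.continuous_exp.tendsto a).comp ha
  simpa [HasProd, Function.comp_def, Real.exp_sum] using this

private lemma prod_le_tprod_real {ι : Type*} {f : ι → ℝ} (h1 : ∀ i, 1 ≤ f i)
    (hf : Multipliable f) (S : Finset ι) : ∏ i ∈ S, f i ≤ ∏' i, f i := by
  classical
  refine ge_of_tendsto hf.hasProd (Filter.eventually_atTop.2 ⟨S, fun s hs => ?_⟩)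
  rw [← Finset.prod_sdiff hs]
  have h2 : (1 : ℝ) ≤ ∏ i ∈ s \ S, f i := by
    calc (1 : ℝ) = ∏ _i ∈ s \ S, (1 : ℝ) := by simp
    _ ≤ ∏ i ∈ s \ S, f i := Finset.prod_le_prod (by intros; norm_num) (fun i _ => h1 i)
  have h3 : 0 ≤ ∏ i ∈ S, f i := Finset.prod_nonneg fun i _ => le_trans zero_le_one (h1 i)
  exact le_mul_of_one_le_left h3 h2



private lemma summable_aux (F : Type*) [Field F] [Fintype F] (hq2 : 2 ≤ Fintype.card F) :
    Summable (fun P : {f : F[X] // f.Monic ∧ Irreducible f} =>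
      ((1 : ℝ) / (Fintype.card F : ℝ) ^ 2) ^ P.1.natDegree) := by
  classical
  set Q : ℝ := (Fintype.card F : ℝ) with hQ
  have hQ2 : (2 : ℝ) ≤ Q := by
    rw [hQ]
    exact_mod_cast hq2
  have hQ0 : (0 : ℝ) < Q := by linarith
  -- the injection into a sigma type
  let e : {f : F[X] // f.Monic ∧ Irreducible f} → Σ d : ℕ, (Fin d → F) :=
    fun P => ⟨P.1.natDegree, fun i => P.1.coeff i⟩
  have einj : Function.Injective e := by
    intro P P' h
    have h1 : P.1.natDegree = P'.1.natDegree := congrArg Sigma.fst h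
    have h2 : ∀ n, n < P.1.natDegree → P.1.coeff n = P'.1.coeff n := by
      intro n hn
      have := congrArg (fun s : Σ d : ℕ, (Fin d → F) =>
        if h : n < s.1 then s.2 ⟨n, h⟩ else 0) h
      simpa [e, hn, h1 ▸ hn] using this
    apply Subtype.ext
    apply Polynomial.ext
    intro n
    rcases lt_trichotomy n P.1.natDegree with hn | hn | hn
    · exact h2 n hn
    · rw [hn, P.2.1.coeff_natDegree, h1, P'.2.1.coeff_natDegree]
    · rw [Polynomial.coeff_eq_zero_of_natDegree_lt hn,
        Polynomial.coeff_eq_zero_of_natDegree_lt (h1 ▸ hn)]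
  have Sb : Summable (fun s : Σ d : ℕ, (Fin d → F) => ((1 : ℝ) / Q ^ 2) ^ s.1) := by
    refine (summable_sigma_of_nonneg (fun _ => by positivity)).2 ⟨fun d => ?_, ?_⟩
    · exact (hasSum_fintype _).summable
    · have hval : ∀ d : ℕ, (∑' _ : Fin d → F, ((1 : ℝ) / Q ^ 2) ^ d) = (1 / Q) ^ d := by
        intro d
        rw [tsum_fintype, Finset.sum_const, Finset.card_univ, Fintype.card_fun,
          Fintype.card_fin, nsmul_eq_mul]
        push_cast
        rw [← hQ, ← mul_pow]
        congr 1
        field_simp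
      refine (summable_congr hval).2 ?_
      exact summable_geometric_of_lt_one (by positivity) (by rw [div_lt_one hQ0]; linarith)
  exact (Sb.comp_injective einj).congr fun P => rfl

/-- For `1 ≤ x < q`, `h_q(x) = ∏_P (1 − x/|P|)^{−1}(1 − 1/|P|)^x ≥ 1 + (x−1)/(2q) ≥ 1`,
the product over monic irreducible polynomials `P` over the field with `q` elements,
where `|P| = q^{deg P}`. -/
theorem hq_lower_bound (F : Type*) [Field F] [Fintype F] (x : ℝ)
    (hq2 : 2 ≤ Fintype.card F) (hx1 : 1 ≤ x) (hxq : x < Fintype.card F) :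
    1 + (x - 1) / (2 * Fintype.card F)
        ≤ (∏' P : {f : F[X] // f.Monic ∧ Irreducible f},
            (1 - x / (Fintype.card F : ℝ) ^ P.1.natDegree)⁻¹ *
              (1 - 1 / (Fintype.card F : ℝ) ^ P.1.natDegree) ^ x) ∧
      1 ≤ (∏' P : {f : F[X] // f.Monic ∧ Irreducible f},
            (1 - x / (Fintype.card F : ℝ) ^ P.1.natDegree)⁻¹ *
              (1 - 1 / (Fintype.card F : ℝ) ^ P.1.natDegree) ^ x) := by
  classical
  set Q : ℝ := (Fintype.card F : ℝ) with hQ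
  set ff : {f : F[X] // f.Monic ∧ Irreducible f} → ℝ := fun P =>
    (1 - x / Q ^ P.1.natDegree)⁻¹ * (1 - 1 / Q ^ P.1.natDegree) ^ x with hff
  have hQ2 : (2 : ℝ) ≤ Q := by rw [hQ]; exact_mod_cast hq2
  have hQ0 : (0 : ℝ) < Q := by linarith
  have hxQ : x < Q := by rw [hQ]; exact_mod_cast hxq
  have hx0 : (0 : ℝ) < x := by linarith
  have hxQ1 : x / Q < 1 := (div_lt_one hQ0).2 hxQ
  have hmxQ : 0 < 1 - x / Q := by linarith
  -- per-P facts
  have hdpos : ∀ P : {f : F[X] // f.Monic ∧ Irreducible f}, 0 < P.1.natDegree :=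
    fun P => P.2.2.natDegree_pos
  have htQ : ∀ P : {f : F[X] // f.Monic ∧ Irreducible f}, Q ≤ Q ^ P.1.natDegree :=
    fun P => le_self_pow₀ (by linarith) (hdpos P).ne'
  have hQd0 : ∀ P : {f : F[X] // f.Monic ∧ Irreducible f}, (0:ℝ) < Q ^ P.1.natDegree :=
    fun P => pow_pos hQ0 _
  have hxt : ∀ P : {f : F[X] // f.Monic ∧ Irreducible f},
      x / Q ^ P.1.natDegree ≤ x / Q :=
    fun P => div_le_div_of_nonneg_left hx0.le hQ0 (htQ P)
  have htx : ∀ P : {f : F[X] // f.Monic ∧ Irreducible f},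
      0 < 1 - x / Q ^ P.1.natDegree := fun P => by have := hxt P; linarith
  have h1t : ∀ P : {f : F[X] // f.Monic ∧ Irreducible f},
      0 < 1 - 1 / Q ^ P.1.natDegree := fun P => by
    have h := div_le_div_of_nonneg_left (by norm_num : (0:ℝ) ≤ 1) hQ0 (htQ P)
    have : 1 / Q ≤ 1 / 2 := by
      rw [div_le_div_iff₀ hQ0 (by norm_num)]; linarith
    linarith
  -- every factor is at least 1
  have one_le : ∀ P, 1 ≤ ff P := by
    intro P
    have hs : (-1 : ℝ) ≤ -(1 / Q ^ P.1.natDegree) := by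
      have := h1t P; linarith
    have hb := one_add_mul_self_le_rpow_one_add hs hx1
    have hb' : 1 - x / Q ^ P.1.natDegree ≤ (1 - 1 / Q ^ P.1.natDegree) ^ x := by
      have e1 : 1 + x * -(1 / Q ^ P.1.natDegree) = 1 - x / Q ^ P.1.natDegree := by ring
      have e2 : 1 + -(1 / Q ^ P.1.natDegree) = 1 - 1 / Q ^ P.1.natDegree := by ring
      rw [e1, e2] at hb
      exact hb
    calc (1:ℝ) = (1 - x / Q ^ P.1.natDegree)⁻¹ * (1 - x / Q ^ P.1.natDegree) := by
          rw [inv_mul_cancel₀ (ne_of_gt (htx P))]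
    _ ≤ ff P := by
          exact mul_le_mul_of_nonneg_left hb' (inv_nonneg.2 (htx P).le)
  have ffpos : ∀ P, 0 < ff P := fun P => lt_of_lt_of_le one_pos (one_le P)
  -- log formula
  have lg : ∀ P, Real.log (ff P)
      = x * Real.log (1 - 1 / Q ^ P.1.natDegree) - Real.log (1 - x / Q ^ P.1.natDegree) := by
    intro P
    rw [hff]
    rw [Real.log_mul (ne_of_gt (inv_pos.2 (htx P))) (ne_of_gt (Real.rpow_pos_of_pos (h1t P) x)),
      Real.log_inv, Real.log_rpow (h1t P)]
    ring
  -- bound on the log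
  have bound : ∀ P, Real.log (ff P)
      ≤ (x ^ 2 / (1 - x / Q)) * ((1:ℝ) / Q ^ 2) ^ P.1.natDegree := by
    intro P
    set t : ℝ := Q ^ P.1.natDegree with hT
    have ht0 : 0 < t := hQd0 P
    have htx' : 0 < 1 - x / t := htx P
    have h1t' : 0 < 1 - 1 / t := h1t P
    have hA : Real.log ((1 - x / t)⁻¹) ≤ (1 - x / t)⁻¹ - 1 :=
      Real.log_le_sub_one_of_pos (inv_pos.2 htx')
    have hA' : -Real.log (1 - x / t) ≤ (1 - x / t)⁻¹ - 1 := by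
      rwa [Real.log_inv] at hA
    have hB : Real.log (1 - 1 / t) ≤ -(1 / t) := by
      have := Real.log_le_sub_one_of_pos h1t'
      linarith
    have hidg : ∀ s : ℝ, 0 < 1 - s → (1 - s)⁻¹ - 1 - s = s ^ 2 * (1 - s)⁻¹ := by
      intro s hs
      have hne : 1 - s ≠ 0 := ne_of_gt hs
      field_simp
      ring
    have hid : (1 - x / t)⁻¹ - 1 - x / t = (x / t) ^ 2 * (1 - x / t)⁻¹ := hidg (x / t) htx'
    have hmono : (1 - x / t)⁻¹ ≤ (1 - x / Q)⁻¹ := by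
      apply inv_anti₀ hmxQ
      have := hxt P
      rw [← hT] at this
      linarith
    have hr : ((1:ℝ) / Q ^ 2) ^ P.1.natDegree = (1 / t) ^ 2 := by
      rw [hT, div_pow, div_pow, one_pow, one_pow, ← pow_mul, ← pow_mul, Nat.mul_comm]
    rw [lg P, hr]
    have step1 : x * Real.log (1 - 1 / t) - Real.log (1 - x / t)
        ≤ -(x / t) + ((1 - x / t)⁻¹ - 1) := by
      have := mul_le_mul_of_nonneg_left hB hx0.le
      have hxt1 : x * -(1/t) = -(x/t) := by ring
      nlinarith [hA']
    have step2 : -(x / t) + ((1 - x / t)⁻¹ - 1) = (x / t) ^ 2 * (1 - x / t)⁻¹ := by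
      linarith [hid]
    have step3 : (x / t) ^ 2 * (1 - x / t)⁻¹ ≤ (x / t) ^ 2 * (1 - x / Q)⁻¹ :=
      mul_le_mul_of_nonneg_left hmono (by positivity)
    have step4 : (x / t) ^ 2 * (1 - x / Q)⁻¹ = x ^ 2 / (1 - x / Q) * (1 / t) ^ 2 := by
      ring
    linarith
  -- summability and multipliability
  have Slog : Summable fun P => Real.log (ff P) :=
    Summable.of_nonneg_of_le (fun P => Real.log_nonneg (one_le P)) bound
      ((summable_aux F hq2).mul_left _)
  have hMf : Multipliable ff := by
    have h := multipliable_exp_of_summable Slog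
    exact (multipliable_congr (fun P => Real.exp_log (ffpos P))).1 h
  -- the finite product over degree-one polynomials
  set c : ℝ := (1 - x / Q)⁻¹ * (1 - 1 / Q) ^ x with hc
  let m : F → {f : F[X] // f.Monic ∧ Irreducible f} :=
    fun a => ⟨X - C a, monic_X_sub_C a, irreducible_X_sub_C a⟩
  have minj : Function.Injective m := by
    intro a b h
    have := congrArg (fun P : {f : F[X] // f.Monic ∧ Irreducible f} => P.1.coeff 0) h
    simp [m, coeff_sub] at this
    exact this
  have hffm : ∀ a : F, ff (m a) = c := by
    intro a
    rw [hff, hc]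
    simp only [m, natDegree_X_sub_C, pow_one]
  have hprod : ∏ P ∈ Finset.image m Finset.univ, ff P = c ^ (Fintype.card F) := by
    rw [Finset.prod_image (fun a _ b _ h => minj h)]
    rw [Finset.prod_congr rfl (fun a _ => hffm a), Finset.prod_const, Finset.card_univ]
  have h1 : c ^ (Fintype.card F) ≤ ∏' P, ff P := by
    rw [← hprod]
    exact prod_le_tprod_real one_le hMf _
  -- lower bound for c
  have hu2 : (1:ℝ) / Q ≤ 1 / 2 := by
    rw [div_le_div_iff₀ hQ0 (by norm_num)]; linarith
  have hcexp : Real.exp ((x - 1) * (1 / Q) ^ 2 / 2) ≤ c := by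
    have hL := aux_L1 (u := 1 / Q) (by positivity) hu2 hx1
      (by rw [mul_one_div]; exact hxQ1)
    rw [mul_one_div] at hL
    have h1mQ : 0 < 1 - 1 / Q := by linarith
    have hcpos : 0 < c := by
      rw [hc]
      exact mul_pos (inv_pos.2 hmxQ) (Real.rpow_pos_of_pos h1mQ x)
    have hlogc : Real.log c = x * Real.log (1 - 1 / Q) - Real.log (1 - x / Q) := by
      rw [hc, Real.log_mul (ne_of_gt (inv_pos.2 hmxQ)) (ne_of_gt (Real.rpow_pos_of_pos h1mQ x)),
        Real.log_inv, Real.log_rpow h1mQ]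
      ring
    calc Real.exp ((x - 1) * (1 / Q) ^ 2 / 2) ≤ Real.exp (Real.log c) := by
          apply Real.exp_le_exp.2
          rw [hlogc]
          exact hL
    _ = c := Real.exp_log hcpos
  have h2 : 1 + (x - 1) / (2 * Q) ≤ c ^ (Fintype.card F) := by
    have e1 : (Fintype.card F : ℝ) * ((x - 1) * (1 / Q) ^ 2 / 2) = (x - 1) / (2 * Q) := by
      rw [← hQ]
      field_simp
    calc 1 + (x - 1) / (2 * Q) ≤ Real.exp ((x - 1) / (2 * Q)) := by
          have := Real.add_one_le_exp ((x - 1) / (2 * Q))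
          linarith
    _ = Real.exp ((x - 1) * (1 / Q) ^ 2 / 2) ^ (Fintype.card F) := by
          rw [← Real.exp_nat_mul, e1]
    _ ≤ c ^ (Fintype.card F) := pow_le_pow_left₀ (Real.exp_nonneg _) hcexp _
  have hmain : 1 + (x - 1) / (2 * Q) ≤ ∏' P, ff P := le_trans h2 h1
  refine ⟨hmain, le_trans ?_ hmain⟩
  have : 0 ≤ (x - 1) / (2 * Q) := div_nonneg (by linarith) (by linarith)
  linarith
end

section
/- Let n ≥ k > 1 be integers, r = (k−1)/log n, and let β be the circle |z| = r in C oriented counterclockwise. Then the contour integral ∮_β (z − r) n^{z−1} / z^k dz = 0. -/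
open Complex

/-- For integers `n ≥ k > 1` and `r = (k−1)/log n`, the contour integral over the
circle `|z| = r` of `(z − r) n^{z−1}/z^k` vanishes. -/
theorem contour_integral_vanishes (n k : ℕ) (hk : 1 < k) (hkn : k ≤ n) :
    (∮ z in C(0, ((k : ℝ) - 1) / Real.log n),
        (z - (((k : ℝ) - 1) / Real.log n : ℝ)) * (n : ℂ) ^ (z - 1) / z ^ k) = 0 := by
  set L : ℝ := Real.log n with hL
  have hn2 : (2 : ℕ) ≤ n := le_trans hk hkn
  have hLpos : 0 < L := Real.log_pos (by exact_mod_cast hn2)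
  set r : ℝ := ((k : ℝ) - 1) / L with hr
  have hrpos : 0 < r := div_pos (by
    have : (1 : ℝ) < (k : ℝ) := by exact_mod_cast hk
    linarith) hLpos
  have hnC : (n : ℂ) ≠ 0 := by
    have : 0 < n := lt_of_lt_of_le (Nat.lt_of_lt_of_le Nat.zero_lt_one hk.le) hkn
    exact_mod_cast this.ne'
  -- F z = (n : ℂ)^(z-1) * z^(1-k) / L
  refine circleIntegral.integral_eq_zero_of_hasDerivWithinAt hrpos.le
    (f := fun z => (n : ℂ) ^ (z - 1) * z ^ ((1 : ℤ) - k) / (L : ℂ)) ?_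
  intro z hz
  have hz0 : z ≠ 0 := by
    intro h
    rw [h] at hz
    simp [Metric.mem_sphere, dist_eq, abs_of_pos hrpos] at hz
    exact hrpos.ne' hz.symm
  have hlog : Complex.log (n : ℂ) = (L : ℂ) := (Complex.natCast_log).symm
  have h1 : HasDerivAt (fun w : ℂ => (n : ℂ) ^ (w - 1))
      ((n : ℂ) ^ (z - 1) * (L : ℂ)) z := by
    have := ((hasDerivAt_id z).sub_const 1).const_cpow (c := (n : ℂ)) (Or.inl hnC)
    simpa [hlog] using this
  have h2 : HasDerivAt (fun w : ℂ => w ^ ((1 : ℤ) - k))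
      ((((1 : ℤ) - k : ℤ) : ℂ) * z ^ ((1 : ℤ) - k - 1)) z := hasDerivAt_zpow _ _ (Or.inl hz0)
  have h3 := ((h1.mul h2).div_const (L : ℂ))
  convert h3.hasDerivWithinAt using 1
  · rfl
  have hLne : (L : ℂ) ≠ 0 := by exact_mod_cast hLpos.ne'
  have hzk : (z : ℂ) ^ k ≠ 0 := pow_ne_zero _ hz0
  have e1 : z ^ ((1 : ℤ) - k) = z / z ^ k := by
    rw [zpow_sub₀ hz0, zpow_one, zpow_natCast]
  have e2 : z ^ ((1 : ℤ) - k - 1) = (z ^ k)⁻¹ := by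
    rw [sub_sub, add_comm, ← sub_sub, sub_self, zero_sub, zpow_neg, zpow_natCast]
  have hrC : ((r : ℝ) : ℂ) = ((k : ℂ) - 1) / (L : ℂ) := by
    rw [hr]; push_cast; ring
  rw [e1, e2, hrC]
  push_cast
  field_simp
  ring
end

section
/- Let n ≥ k > 1 be integers, r = (k−1)/log n, β the circle |z| = r oriented counterclockwise, and let X be a Poisson random variable with mean log n. Then for each integer j ≥ 0 there is a constant C_j such that ∮_β |(z−r)^j n^{z−1} / z^k| |dz| ≤ C_j · P(X = k−1) · (√k / log n)^j. -/
open Real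

section AuxLemmas
open MeasureTheory

lemma aux_pow_exp (j : ℕ) {y : ℝ} (hy : 0 ≤ y) :
    y ^ j * Real.exp (-(y ^ 2 / 4)) ≤ ((2 * j + 1 : ℕ) : ℝ) ^ j := by
  rcases Nat.eq_zero_or_pos j with hj | hj
  · simp [hj]
    positivity
  have hb : (0:ℝ) ≤ ((2 * j + 1 : ℕ) : ℝ) ^ j := by positivity
  have ha : 0 ≤ y ^ j * Real.exp (-(y ^ 2 / 4)) := by positivity
  have hsq : (y ^ j * Real.exp (-(y ^ 2 / 4))) ^ 2 ≤ (((2 * j + 1 : ℕ) : ℝ) ^ j) ^ 2 := by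
    have h1 : (y ^ 2) ^ j ≤ (2 * j : ℝ) ^ j * Real.exp (y ^ 2 / 2) := by
      have hj' : (0:ℝ) < 2 * j := by positivity
      have h2 : y ^ 2 / (2 * j) ≤ Real.exp (y ^ 2 / (2 * j)) :=
        le_trans (by linarith [Real.add_one_le_exp (y ^ 2 / (2 * j))])
          (le_refl _)
      have h3 : (y ^ 2 / (2 * j)) ^ j ≤ (Real.exp (y ^ 2 / (2 * j))) ^ j :=
        pow_le_pow_left₀ (by positivity) h2 j
      have h4 : (Real.exp (y ^ 2 / (2 * j))) ^ j = Real.exp (y ^ 2 / 2) := by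
        rw [← Real.exp_nat_mul]
        congr 1
        field_simp
      rw [h4] at h3
      have h5 : (y ^ 2) ^ j = (2 * j : ℝ) ^ j * (y ^ 2 / (2 * j)) ^ j := by
        rw [← mul_pow]
        congr 1
        field_simp
      rw [h5]
      exact mul_le_mul_of_nonneg_left h3 (by positivity)
    calc (y ^ j * Real.exp (-(y ^ 2 / 4))) ^ 2
        = (y ^ 2) ^ j * Real.exp (-(y ^ 2 / 2)) := by
          rw [mul_pow, ← Real.exp_nat_mul, ← pow_mul, pow_mul']
          ring_nf
      _ ≤ ((2 * j : ℝ) ^ j * Real.exp (y ^ 2 / 2)) * Real.exp (-(y ^ 2 / 2)) := by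
          exact mul_le_mul_of_nonneg_right h1 (Real.exp_nonneg _)
      _ = (2 * j : ℝ) ^ j := by
          rw [mul_assoc, ← Real.exp_add]
          simp
      _ ≤ (((2 * j + 1 : ℕ) : ℝ) ^ j) ^ 2 := by
          rw [← pow_mul, pow_mul']
          apply pow_le_pow_left₀ (by positivity)
          push_cast
          nlinarith [sq_nonneg ((j:ℝ))]
  calc y ^ j * Real.exp (-(y ^ 2 / 4)) = √((y ^ j * Real.exp (-(y ^ 2 / 4))) ^ 2) := by
        rw [Real.sqrt_sq ha]
    _ ≤ √((((2 * j + 1 : ℕ) : ℝ) ^ j) ^ 2) := Real.sqrt_le_sqrt hsq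
    _ = ((2 * j + 1 : ℕ) : ℝ) ^ j := Real.sqrt_sq hb


lemma aux_abs (n : ℕ) (hn : 0 < n) (r t : ℝ) (hr : 0 < r) (j k : ℕ) :
    norm
        (((r : ℂ) * Complex.exp (t * Complex.I) - (r : ℂ)) ^ j
          * (n : ℂ) ^ ((r : ℂ) * Complex.exp (t * Complex.I) - 1)
          / ((r : ℂ) * Complex.exp (t * Complex.I)) ^ k)
      = (r * norm (Complex.exp (t * Complex.I) - 1)) ^ j
          * Real.exp ((r * Real.cos t - 1) * Real.log n) / r ^ k := by
  have hn' : (0:ℝ) < n := by exact_mod_cast hn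
  rw [norm_div, norm_mul, norm_pow, norm_pow]
  have h1 : norm ((r : ℂ) * Complex.exp (t * Complex.I) - (r : ℂ))
      = r * norm (Complex.exp (t * Complex.I) - 1) := by
    rw [show (r : ℂ) * Complex.exp (t * Complex.I) - (r : ℂ)
        = (r : ℂ) * (Complex.exp (t * Complex.I) - 1) by ring, norm_mul,
      Complex.norm_of_nonneg hr.le]
  have h2 : norm ((n : ℂ) ^ ((r : ℂ) * Complex.exp (t * Complex.I) - 1))
      = Real.exp ((r * Real.cos t - 1) * Real.log n) := by
    rw [show ((n : ℕ) : ℂ) = ((n : ℝ) : ℂ) by push_cast; ring,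
      Complex.norm_cpow_eq_rpow_re_of_pos hn']
    rw [Real.rpow_def_of_pos hn']
    congr 1
    rw [mul_comm]
    congr 1
    simp [Complex.sub_re, Complex.mul_re, Complex.exp_ofReal_mul_I_re]
  have h3 : norm ((r : ℂ) * Complex.exp (t * Complex.I)) = r := by
    rw [norm_mul, Complex.norm_exp_ofReal_mul_I, Complex.norm_of_nonneg hr.le, mul_one]
  rw [h1, h2, h3]

lemma aux_absc (t : ℝ) :
    norm (Complex.exp (t * Complex.I) - 1) ^ 2 = 2 - 2 * Real.cos t := by
  rw [Complex.sq_norm, Complex.normSq_apply]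
  simp [Complex.sub_re, Complex.sub_im, Complex.exp_ofReal_mul_I_re, Complex.exp_ofReal_mul_I_im]
  nlinarith [Real.sin_sq_add_cos_sq t]


lemma aux_stirling (m : ℕ) (hm : 1 ≤ m) :
    (m.factorial : ℝ) * Real.exp m ≤ Real.exp 1 * Real.sqrt m * (m : ℝ) ^ m := by
  have hm0 : (0:ℝ) < m := by exact_mod_cast hm
  have hseq : Stirling.stirlingSeq m ≤ Stirling.stirlingSeq 1 := by
    obtain ⟨p, rfl⟩ := Nat.exists_eq_add_of_le hm
    have := Stirling.log_stirlingSeq'_antitone (Nat.zero_le p)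
    simp only [Function.comp] at this
    have h1 : 0 < Stirling.stirlingSeq (p + 1) := Stirling.stirlingSeq'_pos p
    have h2 : 0 < Stirling.stirlingSeq 1 := Stirling.stirlingSeq'_pos 0
    rw [show (1:ℕ) + p = p + 1 by ring]
    exact (Real.log_le_log_iff h1 h2).mp (by simpa [Nat.succ_eq_add_one] using this)
  have hdef : (m.factorial : ℝ)
      = Stirling.stirlingSeq m * (Real.sqrt (2 * m) * ((m : ℝ) / Real.exp 1) ^ m) := by
    rw [Stirling.stirlingSeq]
    field_simp
  have hone : Stirling.stirlingSeq 1 = Real.exp 1 / Real.sqrt 2 := Stirling.stirlingSeq_one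
  have hfac : (m.factorial : ℝ) ≤ Real.exp 1 / Real.sqrt 2
      * (Real.sqrt (2 * m) * ((m : ℝ) / Real.exp 1) ^ m) := by
    rw [hdef]
    apply mul_le_mul_of_nonneg_right (hone ▸ hseq) (by positivity)
  have hsqrt : Real.sqrt (2 * m) = Real.sqrt 2 * Real.sqrt m := Real.sqrt_mul (by norm_num) _
  have h2 : Real.sqrt 2 ≠ 0 := by positivity
  have key : Real.exp 1 / Real.sqrt 2 * (Real.sqrt (2 * m) * ((m : ℝ) / Real.exp 1) ^ m)
      = Real.exp 1 * Real.sqrt m * ((m : ℝ) ^ m / Real.exp m) := by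
    rw [hsqrt, div_pow, ← Real.exp_nat_mul]
    field_simp
  rw [key] at hfac
  calc (m.factorial : ℝ) * Real.exp m
      ≤ Real.exp 1 * Real.sqrt m * ((m : ℝ) ^ m / Real.exp m) * Real.exp m :=
        mul_le_mul_of_nonneg_right hfac (Real.exp_nonneg _)
    _ = Real.exp 1 * Real.sqrt m * (m : ℝ) ^ m := by
        field_simp


lemma aux_jordan {t : ℝ} (h0 : 0 ≤ t) (h1 : t ≤ π) : 2 * (t / π) ^ 2 ≤ 1 - Real.cos t := by
  have hs : t / π ≤ Real.sin (t / 2) := by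
    have := Real.mul_le_sin (x := t / 2) (by linarith) (by linarith)
    calc t / π = 2 / π * (t / 2) := by field_simp
      _ ≤ Real.sin (t / 2) := this
  have hcos : Real.cos t = 1 - 2 * Real.sin (t / 2) ^ 2 := by
    have h := Real.cos_sq (t / 2)
    rw [show 2 * (t / 2) = t by ring] at h
    have h2 := Real.sin_sq_add_cos_sq (t / 2)
    nlinarith
  have ht : 0 ≤ t / π := by positivity
  nlinarith [hs, ht]

lemma aux_gauss {m : ℝ} (hm : 1 ≤ m) :
    (∫ t in (0:ℝ)..(2 * π), Real.exp (-(m * (1 - Real.cos t) / 2)))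
      ≤ π * Real.sqrt π / Real.sqrt m := by
  have hm0 : 0 < m := by linarith
  set b : ℝ := m / π ^ 2 with hb
  have hb0 : 0 < b := by positivity
  have hcont : Continuous fun t : ℝ => Real.exp (-(m * (1 - Real.cos t) / 2)) := by
    continuity
  have hcontg : Continuous fun t : ℝ => Real.exp (-b * t ^ 2) := by continuity
  have key1 : ∀ t ∈ Set.Icc (0:ℝ) π,
      Real.exp (-(m * (1 - Real.cos t) / 2)) ≤ Real.exp (-b * t ^ 2) := by
    intro t ht
    apply Real.exp_le_exp.mpr
    have := aux_jordan ht.1 ht.2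
    have hπ := Real.pi_pos
    rw [div_pow] at this
    have key : m * (t ^ 2 / π ^ 2) ≤ m * (1 - Real.cos t) / 2 := by
      nlinarith [mul_nonneg hm0.le (sub_nonneg.mpr this)]
    have : -b * t ^ 2 = -(m * (t ^ 2 / π ^ 2)) := by rw [hb]; ring
    rw [this]
    linarith
  have key2 : ∀ t ∈ Set.Icc π (2*π),
      Real.exp (-(m * (1 - Real.cos t) / 2)) ≤ Real.exp (-b * (2*π - t) ^ 2) := by
    intro t ht
    apply Real.exp_le_exp.mpr
    have h0 : 0 ≤ 2*π - t := by linarith [ht.2]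
    have h1 : 2*π - t ≤ π := by linarith [ht.1]
    have := aux_jordan h0 h1
    rw [Real.cos_two_pi_sub] at this
    have hπ := Real.pi_pos
    rw [div_pow] at this
    have key : m * ((2*π - t) ^ 2 / π ^ 2) ≤ m * (1 - Real.cos t) / 2 := by
      nlinarith [mul_nonneg hm0.le (sub_nonneg.mpr this)]
    have heq : -b * (2*π - t) ^ 2 = -(m * ((2*π - t) ^ 2 / π ^ 2)) := by rw [hb]; ring
    rw [heq]
    linarith
  have hπ := Real.pi_pos
  have half : (∫ t in (0:ℝ)..π, Real.exp (-b * t ^ 2)) ≤ Real.sqrt (π / b) / 2 := by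
    rw [← integral_gaussian_Ioi b]
    rw [intervalIntegral.integral_of_le (by positivity)]
    apply setIntegral_mono_set
    · exact (integrable_exp_neg_mul_sq hb0).integrableOn
    · filter_upwards with x using Real.exp_nonneg _
    · apply HasSubset.Subset.eventuallyLE
      exact Set.Ioc_subset_Ioi_self
  have split : (∫ t in (0:ℝ)..(2*π), Real.exp (-(m * (1 - Real.cos t) / 2)))
      = (∫ t in (0:ℝ)..π, Real.exp (-(m * (1 - Real.cos t) / 2)))
        + (∫ t in π..(2*π), Real.exp (-(m * (1 - Real.cos t) / 2))) := by
    rw [intervalIntegral.integral_add_adjacent_intervals] <;>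
      exact hcont.intervalIntegrable _ _
  have part1 : (∫ t in (0:ℝ)..π, Real.exp (-(m * (1 - Real.cos t) / 2)))
      ≤ ∫ t in (0:ℝ)..π, Real.exp (-b * t ^ 2) := by
    apply intervalIntegral.integral_mono_on (by positivity)
      (hcont.intervalIntegrable _ _) (hcontg.intervalIntegrable _ _) key1
  have part2 : (∫ t in π..(2*π), Real.exp (-(m * (1 - Real.cos t) / 2)))
      ≤ ∫ t in (0:ℝ)..π, Real.exp (-b * t ^ 2) := by
    have : (∫ t in π..(2*π), Real.exp (-b * (2*π - t) ^ 2))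
        = ∫ t in (0:ℝ)..π, Real.exp (-b * t ^ 2) := by
      have := intervalIntegral.integral_comp_sub_left (a := π) (b := 2*π)
        (fun t => Real.exp (-b * t ^ 2)) (2*π)
      simpa [neg_mul, two_mul] using this
    rw [← this]
    apply intervalIntegral.integral_mono_on (by linarith)
      (hcont.intervalIntegrable _ _)
      ((hcontg.comp (by continuity)).intervalIntegrable _ _) key2
  have final : Real.sqrt (π / b) = π * Real.sqrt π / Real.sqrt m := by
    rw [hb, div_div_eq_mul_div, Real.sqrt_div (by positivity : (0:ℝ) ≤ π * π ^ 2),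
      Real.sqrt_mul Real.pi_pos.le, Real.sqrt_sq Real.pi_pos.le]
    ring
  calc (∫ t in (0:ℝ)..(2*π), Real.exp (-(m * (1 - Real.cos t) / 2)))
      ≤ Real.sqrt (π / b) / 2 + Real.sqrt (π / b) / 2 := by
        rw [split]; exact add_le_add (part1.trans half) (part2.trans half)
    _ = Real.sqrt (π / b) := by ring
    _ = π * Real.sqrt π / Real.sqrt m := final

end AuxLemmas

set_option maxHeartbeats 1000000

/-- For `n ≥ k > 1`, `r = (k−1)/log n`, `β` the circle `|z| = r`, `X` Poisson with
mean `log n`: for each `j ≥ 0`,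
`∮_β |(z−r)^j n^{z−1}/z^k| |dz| ≤ C_j P(X = k−1) (√k/log n)^j`, where
`P(X = k−1) = n^{−1} (log n)^{k−1}/(k−1)!`. -/
theorem arc_length_integral_bound (j : ℕ) :
    ∃ C : ℝ, 0 < C ∧ ∀ n k : ℕ, 1 < k → k ≤ n →
      (∫ t in (0 : ℝ)..(2 * π),
          norm
            (((((k : ℝ) - 1) / Real.log n : ℝ) * Complex.exp (t * Complex.I)
                  - (((k : ℝ) - 1) / Real.log n : ℝ)) ^ j
              * (n : ℂ) ^ ((((k : ℝ) - 1) / Real.log n : ℝ) * Complex.exp (t * Complex.I) - 1)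
              / ((((k : ℝ) - 1) / Real.log n : ℝ) * Complex.exp (t * Complex.I)) ^ k)
            * (((k : ℝ) - 1) / Real.log n))
        ≤ C * ((Real.log n) ^ (k - 1) / (n * (k - 1).factorial))
            * (Real.sqrt k / Real.log n) ^ j := by
  refine ⟨Real.exp 1 * π ^ 2 * ((2 * j + 1 : ℕ) : ℝ) ^ j, by positivity, ?_⟩
  intro n k hk hkn
  obtain ⟨p, rfl⟩ : ∃ p, k = p + 2 := ⟨k - 2, by omega⟩
  have hn2 : (2:ℕ) ≤ n := le_trans (by omega) hkn
  have hn1 : (1:ℝ) < n := by exact_mod_cast lt_of_lt_of_le (by omega : (1:ℕ) < p + 2) hkn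
  have hn0 : (0:ℝ) < n := by linarith
  have hL0 : 0 < Real.log n := Real.log_pos hn1
  have hcast : ((p + 2 : ℕ) : ℝ) - 1 = ((p + 1 : ℕ) : ℝ) := by push_cast; ring
  rw [hcast, show (p + 2 - 1 : ℕ) = p + 1 from rfl]
  set L : ℝ := Real.log n with hLdef
  have hL : 0 < L := hL0
  set mR : ℝ := ((p + 1 : ℕ) : ℝ) with hmRdef
  have hm1 : (1:ℝ) ≤ mR := by rw [hmRdef]; exact_mod_cast Nat.le_add_left 1 p
  have hm0 : (0:ℝ) < mR := by linarith
  set r : ℝ := mR / L with hrdef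
  have hr : 0 < r := by positivity
  set s : ℝ := Real.sqrt mR with hsdef
  have hs1 : 1 ≤ s := Real.one_le_sqrt.mpr hm1
  have hs0 : 0 < s := by linarith
  have hs2 : s ^ 2 = mR := Real.sq_sqrt hm0.le
  set sk : ℝ := Real.sqrt ((p + 2 : ℕ) : ℝ) with hskdef
  set B : ℝ := ((2 * j + 1 : ℕ) : ℝ) ^ j with hBdef
  have hB0 : 0 < B := by positivity
  set K : ℝ := r ^ (j + 1) / r ^ (p + 2) * (B / s ^ j) * (Real.exp mR / n) with hKdef
  have hK0 : 0 ≤ K := by positivity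
  -- pointwise bound
  have hpt : ∀ t ∈ Set.Icc (0:ℝ) (2 * π),
      norm
          (((r : ℂ) * Complex.exp (t * Complex.I) - (r : ℂ)) ^ j
            * (n : ℂ) ^ ((r : ℂ) * Complex.exp (t * Complex.I) - 1)
            / ((r : ℂ) * Complex.exp (t * Complex.I)) ^ (p + 2)) * r
        ≤ K * Real.exp (-(mR * (1 - Real.cos t) / 2)) := by
    intro t _
    rw [aux_abs n (by omega) r t hr j (p + 2)]
    set c : ℝ := norm (Complex.exp (t * Complex.I) - 1) with hcdef
    have hc0 : 0 ≤ c := norm_nonneg _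
    have hc2 : c ^ 2 = 2 - 2 * Real.cos t := aux_absc t
    have hrL : r * L = mR := div_mul_cancel₀ _ (ne_of_gt hL)
    have hexp : Real.exp ((r * Real.cos t - 1) * L)
        = Real.exp mR * Real.exp (-(mR * c ^ 2 / 4))
          * Real.exp (-(mR * (1 - Real.cos t) / 2)) * Real.exp (-L) := by
      rw [← Real.exp_add, ← Real.exp_add, ← Real.exp_add]
      congr 1
      have h1 : r * Real.cos t * L = mR * Real.cos t := by
        rw [mul_right_comm, hrL]
      nlinarith [hc2, h1]
    have hnL : Real.exp (-L) = (n : ℝ)⁻¹ := by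
      rw [Real.exp_neg, hLdef, Real.exp_log hn0]
    have hycb : c ^ j * Real.exp (-(mR * c ^ 2 / 4)) ≤ B / s ^ j := by
      rw [le_div_iff₀ (by positivity : (0:ℝ) < s ^ j)]
      have hy := aux_pow_exp j (mul_nonneg hs0.le hc0)
      calc c ^ j * Real.exp (-(mR * c ^ 2 / 4)) * s ^ j
          = (s * c) ^ j * Real.exp (-((s * c) ^ 2 / 4)) := by
            rw [mul_pow, mul_pow, hs2]; ring
        _ ≤ B := hy
    calc (r * c) ^ j * Real.exp ((r * Real.cos t - 1) * L) / r ^ (p + 2) * r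
        = r ^ (j + 1) / r ^ (p + 2) * (c ^ j * Real.exp (-(mR * c ^ 2 / 4)))
            * (Real.exp mR / n) * Real.exp (-(mR * (1 - Real.cos t) / 2)) := by
          rw [hexp, hnL, mul_pow]
          ring
      _ ≤ r ^ (j + 1) / r ^ (p + 2) * (B / s ^ j)
            * (Real.exp mR / n) * Real.exp (-(mR * (1 - Real.cos t) / 2)) := by
          apply mul_le_mul_of_nonneg_right _ (Real.exp_nonneg _)
          apply mul_le_mul_of_nonneg_right _ (by positivity)
          exact mul_le_mul_of_nonneg_left hycb (by positivity)
      _ = K * Real.exp (-(mR * (1 - Real.cos t) / 2)) := by rw [hKdef]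
  -- continuity / integrability
  have hzc : Continuous fun t : ℝ => (r : ℂ) * Complex.exp ((t : ℂ) * Complex.I) := by
    continuity
  have hFc : Continuous fun t : ℝ =>
      norm
          (((r : ℂ) * Complex.exp (t * Complex.I) - (r : ℂ)) ^ j
            * (n : ℂ) ^ ((r : ℂ) * Complex.exp (t * Complex.I) - 1)
            / ((r : ℂ) * Complex.exp (t * Complex.I)) ^ (p + 2)) * r := by
    apply Continuous.mul _ continuous_const
    apply continuous_norm.comp
    apply Continuous.div
    · apply Continuous.mul
      · exact (hzc.sub continuous_const).pow j
      · exact Continuous.const_cpow (hzc.sub continuous_const)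
          (Or.inl (Nat.cast_ne_zero.mpr (by omega)))
    · exact hzc.pow _
    · intro t
      exact pow_ne_zero _
        (mul_ne_zero (Complex.ofReal_ne_zero.mpr hr.ne') (Complex.exp_ne_zero _))
  have hgc : Continuous fun t : ℝ => K * Real.exp (-(mR * (1 - Real.cos t) / 2)) := by
    continuity
  -- Stirling
  have hst : ((p + 1).factorial : ℝ) * Real.exp mR ≤ Real.exp 1 * s * mR ^ (p + 1) :=
    aux_stirling (p + 1) (by omega)
  have hss : s ≤ sk := by
    rw [hsdef, hskdef, hmRdef]
    exact Real.sqrt_le_sqrt (by push_cast; linarith)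
  have hsk0 : 0 ≤ sk := Real.sqrt_nonneg _
  have hsπ : Real.sqrt π ≤ π := by
    nlinarith [Real.sq_sqrt Real.pi_pos.le, Real.sqrt_nonneg π, Real.pi_gt_three]
  have key : π * Real.sqrt π * Real.exp mR * ((p + 1).factorial : ℝ) * mR ^ (j + 1)
      ≤ Real.exp 1 * π ^ 2 * sk ^ j * s ^ (j + 1) * mR ^ (p + 2) := by
    calc π * Real.sqrt π * Real.exp mR * ((p + 1).factorial : ℝ) * mR ^ (j + 1)
        = (((p + 1).factorial : ℝ) * Real.exp mR) * (π * Real.sqrt π * mR ^ (j + 1)) := by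
          ring
      _ ≤ (Real.exp 1 * s * mR ^ (p + 1)) * (π * Real.sqrt π * mR ^ (j + 1)) := by
          apply mul_le_mul_of_nonneg_right hst (by positivity)
      _ = Real.exp 1 * π * mR ^ (p + 1) * (Real.sqrt π * s ^ j) * s ^ (j + 3) := by
          rw [show mR ^ (j + 1) = (s ^ 2) ^ (j + 1) by rw [hs2]]
          ring
      _ ≤ Real.exp 1 * π * mR ^ (p + 1) * (π * sk ^ j) * s ^ (j + 3) := by
          have : Real.sqrt π * s ^ j ≤ π * sk ^ j :=
            mul_le_mul hsπ (pow_le_pow_left₀ hs0.le hss j) (by positivity) Real.pi_pos.le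
          apply mul_le_mul_of_nonneg_right
            (mul_le_mul_of_nonneg_left this (by positivity)) (by positivity)
      _ = Real.exp 1 * π ^ 2 * sk ^ j * s ^ (j + 1) * mR ^ (p + 2) := by
          rw [show mR ^ (p + 2) = mR ^ (p + 1) * s ^ 2 by rw [hs2]; ring]
          ring
  -- final arithmetic
  have hfacpos : (0:ℝ) < ((p + 1).factorial : ℝ) := by positivity
  have final : K * (π * Real.sqrt π / s)
      ≤ Real.exp 1 * π ^ 2 * B * (L ^ (p + 1) / (n * ((p + 1).factorial : ℝ)))
          * (sk / L) ^ j := by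
    have hfrac1 : K * (π * Real.sqrt π / s)
        = (B * (π * Real.sqrt π * Real.exp mR * mR ^ (j + 1)) * L ^ (p + 2))
            / (L ^ (j + 1) * mR ^ (p + 2) * s ^ (j + 1) * n) := by
      rw [hKdef, hrdef]
      rw [div_pow, div_pow]
      field_simp
      ring
    have hfrac2 : Real.exp 1 * π ^ 2 * B * (L ^ (p + 1) / (n * ((p + 1).factorial : ℝ)))
          * (sk / L) ^ j
        = (B * (Real.exp 1 * π ^ 2 * sk ^ j) * L ^ (p + 1))
            / (n * ((p + 1).factorial : ℝ) * L ^ j) := by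
      rw [div_pow]
      field_simp
    rw [hfrac1, hfrac2, div_le_div_iff₀ (by positivity) (by positivity)]
    calc B * (π * Real.sqrt π * Real.exp mR * mR ^ (j + 1)) * L ^ (p + 2)
          * (n * ((p + 1).factorial : ℝ) * L ^ j)
        = (π * Real.sqrt π * Real.exp mR * ((p + 1).factorial : ℝ) * mR ^ (j + 1))
            * (B * n * (L ^ (p + 2) * L ^ j)) := by ring
      _ ≤ (Real.exp 1 * π ^ 2 * sk ^ j * s ^ (j + 1) * mR ^ (p + 2))
            * (B * n * (L ^ (p + 2) * L ^ j)) := by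
          apply mul_le_mul_of_nonneg_right key (by positivity)
      _ = B * (Real.exp 1 * π ^ 2 * sk ^ j) * L ^ (p + 1)
            * (L ^ (j + 1) * mR ^ (p + 2) * s ^ (j + 1) * n) := by ring
  -- put everything together
  calc (∫ t in (0 : ℝ)..(2 * π),
          norm
            (((r : ℂ) * Complex.exp (t * Complex.I) - (r : ℂ)) ^ j
              * (n : ℂ) ^ ((r : ℂ) * Complex.exp (t * Complex.I) - 1)
              / ((r : ℂ) * Complex.exp (t * Complex.I)) ^ (p + 2)) * r)
      ≤ ∫ t in (0 : ℝ)..(2 * π), K * Real.exp (-(mR * (1 - Real.cos t) / 2)) := by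
        apply intervalIntegral.integral_mono_on (by positivity)
          (hFc.intervalIntegrable _ _) (hgc.intervalIntegrable _ _) hpt
    _ = K * ∫ t in (0 : ℝ)..(2 * π), Real.exp (-(mR * (1 - Real.cos t) / 2)) :=
        intervalIntegral.integral_const_mul _ _
    _ ≤ K * (π * Real.sqrt π / s) := mul_le_mul_of_nonneg_left (aux_gauss hm1) hK0
    _ ≤ _ := final
end

section
/- For n ≥ 2 and a prime power q, the contribution of k = n to the total variation distance between the cycle-count and prime-factor-count distributions satisfies P(Ω(f_{n,q}) = n) − P(K(π_n) = n) = (1/n!)(∏_{i=1}^{n−1}(1 + i/q) − 1) ≥ (1/q)·(1/n!)·binom(n,2). In particular P(Ω(f_{n,q})=n) = binom(q+n−1, n)/q^n and P(K(π_n)=n) = 1/n!. -/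
open Polynomial

section Aux

open Finset UniqueFactorizationMonoid

lemma asc_prod_aux (q n : ℕ) : q.ascFactorial n = ∏ i ∈ Finset.range n, (q + i) := by
  induction n with
  | zero => simp
  | succ n ih => rw [Finset.prod_range_succ, ← ih, Nat.ascFactorial_succ, mul_comm]

lemma ms_card_le_sum_aux (t : Multiset ℕ) (h : ∀ x ∈ t, 1 ≤ x) : Multiset.card t ≤ t.sum := by
  induction t using Multiset.induction with
  | empty => simp
  | cons a t ih =>
    simp only [Multiset.sum_cons, Multiset.card_cons]
    have := h a (Multiset.mem_cons_self a t)
    have := ih (fun x hx => h x (Multiset.mem_cons_of_mem hx))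
    omega

lemma ms_all_one_aux (t : Multiset ℕ) (h : ∀ x ∈ t, 1 ≤ x) (hs : t.sum = Multiset.card t) :
    ∀ x ∈ t, x = 1 := by
  induction t using Multiset.induction with
  | empty => simp
  | cons a t ih =>
    have h1 := h a (Multiset.mem_cons_self a t)
    have h2 : ∀ x ∈ t, 1 ≤ x := fun x hx => h x (Multiset.mem_cons_of_mem hx)
    have h3 := ms_card_le_sum_aux t h2
    simp only [Multiset.sum_cons, Multiset.card_cons] at hs
    intro x hx
    rcases Multiset.mem_cons.mp hx with rfl | hx
    · omega
    · exact ih h2 (by omega) x hx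

lemma ms_two_aux (t : Multiset ℕ) (h : ∀ x ∈ t, 2 ≤ x) : 2 * Multiset.card t ≤ t.sum := by
  induction t using Multiset.induction with
  | empty => simp
  | cons a t ih =>
    simp only [Multiset.sum_cons, Multiset.card_cons]
    have := h a (Multiset.mem_cons_self a t)
    have := ih (fun x hx => h x (Multiset.mem_cons_of_mem hx))
    omega

lemma one_add_sum_le_prod_aux {ι : Type*} (s : Finset ι) (f : ι → ℝ) (h : ∀ i ∈ s, 0 ≤ f i) :
    1 + ∑ i ∈ s, f i ≤ ∏ i ∈ s, (1 + f i) := by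
  induction s using Finset.cons_induction with
  | empty => simp
  | cons a s ha ih =>
    rw [Finset.sum_cons, Finset.prod_cons]
    have h1 : 0 ≤ f a := h a (Finset.mem_cons_self a s)
    have h2 : ∀ i ∈ s, 0 ≤ f i := fun i hi => h i (Finset.mem_cons_of_mem hi)
    have h3 := ih h2
    have h4 : 0 ≤ ∑ i ∈ s, f i := Finset.sum_nonneg h2
    nlinarith

variable {F : Type*} [Field F]

lemma roots_card_of_factors_aux {n : ℕ} (f : F[X]) (hm : f.Monic)
    (hd : f.natDegree = n) (hc : Multiset.card (factors f) = n) :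
    Multiset.card f.roots = n := by
  have hf0 : f ≠ 0 := hm.ne_zero
  obtain ⟨u, hu⟩ := factors_prod hf0
  have hirr : ∀ g ∈ factors f, Irreducible g := fun g hg => irreducible_of_factor g hg
  have h0 : (0 : F[X]) ∉ factors f := fun h => (hirr 0 h).ne_zero rfl
  have hdeg : ((factors f).map natDegree).sum = n := by
    have := Polynomial.natDegree_multiset_prod (factors f) h0
    have hu0 : (u : F[X]) ≠ 0 := u.isUnit.ne_zero
    have hdu : natDegree (u : F[X]) = 0 := natDegree_eq_zero_of_isUnit u.isUnit
    have hp0 : (factors f).prod ≠ 0 := fun h => hf0 (by rw [← hu, h, zero_mul])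
    have key : ((factors f).prod * (u : F[X])).natDegree
        = (factors f).prod.natDegree + (u : F[X]).natDegree := natDegree_mul hp0 hu0
    rw [hu, hd, hdu, add_zero] at key
    omega
  have hone : ∀ g ∈ factors f, g.natDegree = 1 := by
    intro g hg
    have := ms_all_one_aux ((factors f).map natDegree)
      (by rintro x hx
          obtain ⟨g, hg, rfl⟩ := Multiset.mem_map.mp hx
          exact (hirr g hg).natDegree_pos) (by rw [hdeg, Multiset.card_map, hc])
    exact this _ (Multiset.mem_map_of_mem _ hg)
  have hsplit : Splits f := by
    rw [← hu]
    apply Splits.mul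
    · exact Splits.multisetProd (fun g hg => Splits.of_natDegree_le_one (le_of_eq (hone g hg)))
    · exact Splits.of_natDegree_le_one
        (le_of_eq (natDegree_eq_zero_of_isUnit u.isUnit) |>.trans zero_le_one)
  rw [splits_iff_card_roots] at hsplit
  rw [hsplit, hd]

lemma factors_card_of_prod_aux {n : ℕ} (m : Multiset F) (hcard : Multiset.card m = n) :
    Multiset.card (factors ((m.map fun a => X - C a).prod)) = n := by
  set s : Multiset F[X] := m.map fun a => X - C a with hs
  have hirr : ∀ g ∈ s, Irreducible g := by
    rintro g hg
    obtain ⟨a, _, rfl⟩ := Multiset.mem_map.mp hg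
    exact irreducible_X_sub_C a
  have hmonic : s.prod.Monic :=
    monic_multiset_prod_of_monic _ _ (by
      rintro g _; exact monic_X_sub_C g)
  have hrel := factors_unique (fun g hg => irreducible_of_factor g hg) hirr
    (factors_prod hmonic.ne_zero)
  rw [← hcard, ← Multiset.card_map (fun a => X - C a) m, ← hs]
  exact Multiset.card_eq_card_of_rel hrel

lemma monic_prod_aux (m : Multiset F) : ((m.map fun a => X - C a).prod).Monic :=
  monic_multiset_prod_of_monic _ _ (fun a _ => monic_X_sub_C a)

lemma natDegree_prod_aux (m : Multiset F) :
    ((m.map fun a => X - C a).prod).natDegree = Multiset.card m := by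
  rw [natDegree_multiset_prod_of_monic]
  · simp [Multiset.map_map, Function.comp]
  · rintro g hg
    obtain ⟨a, _, rfl⟩ := Multiset.mem_map.mp hg
    exact monic_X_sub_C a

end Aux

/-- The number of cycles of a permutation, counting fixed points as cycles. -/
noncomputable def cycleCount {α : Type*} [Fintype α] [DecidableEq α] (π : Equiv.Perm α) : ℕ :=
  π.cycleType.card + (Fintype.card α - π.support.card)

/-- Contribution of `k = n`:
`P(Ω(f_{n,q}) = n) − P(K(π_n) = n) = (1/n!)(∏_{i=1}^{n−1}(1 + i/q) − 1)
 ≥ (1/q)(1/n!) binom(n,2)`, with `P(Ω(f_{n,q}) = n) = binom(q+n−1,n)/q^n` and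
`P(K(π_n) = n) = 1/n!`. -/
theorem k_eq_n_contribution (F : Type*) [Field F] [Fintype F] (n : ℕ) (hn : 2 ≤ n) :
    ((Nat.card {f : F[X] // f.Monic ∧ f.natDegree = n ∧
            Multiset.card (UniqueFactorizationMonoid.factors f) = n} : ℝ)
          / (Fintype.card F : ℝ) ^ n
        - (Nat.card {π : Equiv.Perm (Fin n) // cycleCount π = n} : ℝ) / n.factorial
      = (1 / n.factorial) *
          ((∏ i ∈ Finset.Icc 1 (n - 1), (1 + (i : ℝ) / Fintype.card F)) - 1)) ∧
    ((1 / (Fintype.card F : ℝ)) * (1 / n.factorial) * n.choose 2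
      ≤ (1 / n.factorial) *
          ((∏ i ∈ Finset.Icc 1 (n - 1), (1 + (i : ℝ) / Fintype.card F)) - 1)) ∧
    ((Nat.card {f : F[X] // f.Monic ∧ f.natDegree = n ∧
            Multiset.card (UniqueFactorizationMonoid.factors f) = n} : ℝ)
          / (Fintype.card F : ℝ) ^ n
      = (Fintype.card F + n - 1).choose n / (Fintype.card F : ℝ) ^ n) ∧
    ((Nat.card {π : Equiv.Perm (Fin n) // cycleCount π = n} : ℝ) / n.factorial
      = 1 / n.factorial) := by
  classical
  set Q : ℕ := Fintype.card F with hQdef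
  have hQ1 : 1 ≤ Q := Fintype.card_pos
  have hq : (0 : ℝ) < (Q : ℝ) := by exact_mod_cast hQ1
  -- count of permutations
  have hpermiff : ∀ π : Equiv.Perm (Fin n), cycleCount π = n ↔ π = 1 := by
    intro π
    have hs_le : π.support.card ≤ n := by
      simpa using Finset.card_le_univ π.support
    have hsum : π.cycleType.sum = π.support.card := Equiv.Perm.sum_cycleType π
    have h2c : 2 * Multiset.card π.cycleType ≤ π.cycleType.sum :=
      ms_two_aux _ (fun x hx => Equiv.Perm.two_le_of_mem_cycleType hx)
    constructor
    · intro h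
      unfold cycleCount at h
      rw [Fintype.card_fin] at h
      have hc0 : π.support.card = 0 := by omega
      have : π.support = ∅ := Finset.card_eq_zero.mp hc0
      exact Equiv.Perm.support_eq_empty_iff.mp this
    · rintro rfl
      unfold cycleCount
      simp [Equiv.Perm.cycleType_one]
  have hpermcard : Nat.card {π : Equiv.Perm (Fin n) // cycleCount π = n} = 1 := by
    rw [Nat.card_congr (Equiv.subtypeEquivRight hpermiff), Nat.card_eq_fintype_card,
      Fintype.card_subtype_eq (1 : Equiv.Perm (Fin n))]
  -- count of polynomials
  have hpolycard : Nat.card {f : F[X] // f.Monic ∧ f.natDegree = n ∧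
      Multiset.card (UniqueFactorizationMonoid.factors f) = n} = (Q + n - 1).choose n := by
    have e : {f : F[X] // f.Monic ∧ f.natDegree = n ∧
        Multiset.card (UniqueFactorizationMonoid.factors f) = n} ≃ Sym F n :=
      { toFun := fun f => ⟨f.1.roots, roots_card_of_factors_aux f.1 f.2.1 f.2.2.1 f.2.2.2⟩
        invFun := fun m => ⟨(m.1.map fun a => X - C a).prod,
          monic_prod_aux m.1, by rw [natDegree_prod_aux, m.2],
          factors_card_of_prod_aux m.1 m.2⟩
        left_inv := fun f => by
          apply Subtype.ext
          exact prod_multiset_X_sub_C_of_monic_of_roots_card_eq f.2.1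
            (by rw [roots_card_of_factors_aux f.1 f.2.1 f.2.2.1 f.2.2.2, f.2.2.1])
        right_inv := fun m => by
          apply Subtype.ext
          exact roots_multiset_prod_X_sub_C m.1 }
    rw [Nat.card_congr e, Nat.card_eq_fintype_card, Sym.card_sym_eq_choose]
  -- algebraic identity
  have hnat : n.factorial * (Q + n - 1).choose n = ∏ i ∈ Finset.range n, (Q + i) := by
    rw [← Nat.ascFactorial_eq_factorial_mul_choose', asc_prod_aux]
  have hreal : (n.factorial : ℝ) * ((Q + n - 1).choose n : ℝ)
      = ∏ i ∈ Finset.range n, ((Q : ℝ) + i) := by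
    exact_mod_cast congrArg (Nat.cast : ℕ → ℝ) hnat
  have hsplit : Finset.range n = insert 0 (Finset.Icc 1 (n - 1)) := by
    ext x; simp only [Finset.mem_range, Finset.mem_insert, Finset.mem_Icc]; omega
  have hprodIcc : ∏ i ∈ Finset.Icc 1 (n - 1), (1 + (i : ℝ) / (Q : ℝ))
      = ∏ i ∈ Finset.range n, (1 + (i : ℝ) / (Q : ℝ)) := by
    rw [hsplit, Finset.prod_insert (by simp)]
    simp
  have hstep : ∏ i ∈ Finset.range n, (1 + (i : ℝ) / (Q : ℝ))
      = (∏ i ∈ Finset.range n, ((Q : ℝ) + i)) / (Q : ℝ) ^ n := by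
    rw [eq_div_iff (by positivity)]
    have hpow : (Q : ℝ) ^ n = ∏ _i ∈ Finset.range n, (Q : ℝ) := by simp
    rw [hpow, ← Finset.prod_mul_distrib]
    refine Finset.prod_congr rfl fun i _ => ?_
    field_simp
  have hP1 : ((Q + n - 1).choose n : ℝ) / (Q : ℝ) ^ n
      = (1 / n.factorial) * ∏ i ∈ Finset.Icc 1 (n - 1), (1 + (i : ℝ) / (Q : ℝ)) := by
    have hfac : (0 : ℝ) < n.factorial := by exact_mod_cast n.factorial_pos
    rw [hprodIcc, hstep, ← hreal]
    field_simp
  -- sum identity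
  have hsumnat : ∑ i ∈ Finset.Icc 1 (n - 1), i = n.choose 2 := by
    have h1 : (∑ i ∈ Finset.range n, i) * 2 = n * (n - 1) := Finset.sum_range_id_mul_two n
    have h2 : n.choose 2 = n * (n - 1) / 2 := Nat.choose_two_right n
    have h3 : ∑ i ∈ Finset.range n, i = ∑ i ∈ Finset.Icc 1 (n - 1), i := by
      rw [hsplit, Finset.sum_insert (by simp), zero_add]
    omega
  have hsumreal : ∑ i ∈ Finset.Icc 1 (n - 1), (i : ℝ) = (n.choose 2 : ℝ) := by
    rw [← Nat.cast_sum, hsumnat]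
  -- the inequality
  have hineq : (1 / (Q : ℝ)) * (1 / n.factorial) * n.choose 2
      ≤ (1 / n.factorial) *
        ((∏ i ∈ Finset.Icc 1 (n - 1), (1 + (i : ℝ) / (Q : ℝ))) - 1) := by
    have h5 := one_add_sum_le_prod_aux (Finset.Icc 1 (n - 1)) (fun i => (i : ℝ) / (Q : ℝ))
      (fun i _ => by positivity)
    have h6 : (n.choose 2 : ℝ) / (Q : ℝ)
        ≤ (∏ i ∈ Finset.Icc 1 (n - 1), (1 + (i : ℝ) / (Q : ℝ))) - 1 := by
      have h7 : ∑ i ∈ Finset.Icc 1 (n - 1), ((i : ℝ) / (Q : ℝ))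
          = (n.choose 2 : ℝ) / (Q : ℝ) := by
        rw [← Finset.sum_div, hsumreal]
      rw [← h7]
      linarith [h5]
    have h8 : (0 : ℝ) ≤ 1 / n.factorial := by positivity
    calc (1 / (Q : ℝ)) * (1 / n.factorial) * n.choose 2
        = (1 / n.factorial) * ((n.choose 2 : ℝ) / (Q : ℝ)) := by ring
      _ ≤ (1 / n.factorial) *
          ((∏ i ∈ Finset.Icc 1 (n - 1), (1 + (i : ℝ) / (Q : ℝ))) - 1) :=
          mul_le_mul_of_nonneg_left h6 h8
  refine ⟨?_, hineq, ?_, ?_⟩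
  · rw [hpolycard, hpermcard, hP1]
    push_cast
    ring
  · rw [hpolycard]
  · rw [hpermcard]
    push_cast
    ring
end
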